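/- arXiv:2411.13178 — 4 statements merged into one kernel-verified Lean document; each statement's English description precedes it below -/
import Mathlib

section
/- (Universal matrix Capelli identity for U(gl_N).) Let X and D be the N×N matrices of multiplication and differentiation operators on the polynomial ring in variables x_i^j, and set L = XD. Then for every integer n ≥ 1, in Mat_N(ℂ)^{⊗n} ⊗ W_N, one has L_1 (L_2 − j_2) (L_3 − j_3) ⋯ (L_n − j_n) = X_1 X_2 ⋯ X_n D_1 D_2 ⋯ D_n, where j_k = Σ_{i=1}^{k−1} P_{ik} are the Jucys–Murphy matrices. -/
open Matrix
open scoped Classical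

noncomputable section

/-- The Weyl algebra `W_N`: the algebra of ℂ-linear endomorphisms of the
polynomial ring `ℂ[x_i^j : 1 ≤ i,j ≤ N]`, with variables indexed by pairs `(i,j)`. -/
abbrev Wn (N : ℕ) : Type := Module.End ℂ (MvPolynomial (Fin N × Fin N) ℂ)

/-- The matrix `X = ||x_i^j||` whose `(i,j)` entry is the operator of
multiplication by the variable `x_i^j`. -/
def Xop (N : ℕ) : Matrix (Fin N) (Fin N) (Wn N) := fun i j =>
  LinearMap.mulLeft ℂ (MvPolynomial.X (i, j))

/-- The matrix `D = ||∂/∂x_j^i||` whose `(i,j)` entry is the partial derivative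
operator `∂/∂x_j^i`. -/
def Dop (N : ℕ) : Matrix (Fin N) (Fin N) (Wn N) := fun i j =>
  (MvPolynomial.pderiv (j, i)).toLinearMap

/-- For an `N×N` matrix `A` over `U`, the element `A_i` of
`Mat_N(ℂ)^{⊗n} ⊗ U` (identified with matrices over `U` indexed by `n`-tuples
of indices) acting as `A` in the `i`-th tensor factor (0-based) and as the
identity in all other factors.  (If `i` is out of range it is the identity.) -/
def tensorEmb {U : Type*} [Ring U] (N n : ℕ) (i : ℕ) (A : Matrix (Fin N) (Fin N) U) :
    Matrix (Fin n → Fin N) (Fin n → Fin N) U := fun a b =>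
  if h : i < n then
    if ∀ k : Fin n, (k : ℕ) ≠ i → a k = b k then A (a ⟨i, h⟩) (b ⟨i, h⟩) else 0
  else if a = b then 1 else 0

/-- The permutation matrix `P_{ik} ∈ Mat_N(ℂ)^{⊗n} ⊗ U` exchanging the `i`-th
and `k`-th tensor factors (0-based); for `n = 2` it has matrix elements
`P_{kl}^{mn} = δ_k^n δ_l^m`. -/
def permM {U : Type*} [Ring U] (N n : ℕ) (i k : ℕ) :
    Matrix (Fin n → Fin N) (Fin n → Fin N) U := fun a b =>
  if h : i < n ∧ k < n then
    if a = b ∘ (Equiv.swap (⟨i, h.1⟩ : Fin n) ⟨k, h.2⟩) then 1 else 0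
  else if a = b then 1 else 0

/-- The Jucys–Murphy matrix `j_k = Σ_{i=1}^{k-1} P_{ik}` (here 0-based: the
`k`-th JM matrix is the sum of `P_{ik}` over `i < k`; for `k = 0` it is `0`). -/
def jmM (N n : ℕ) (k : ℕ) : Matrix (Fin n → Fin N) (Fin n → Fin N) ℂ :=
  ∑ i ∈ Finset.range k, permM N n i k

open MvPolynomial in
lemma pderiv_pderiv_comm {σ R : Type*} [CommSemiring R] (i j : σ) (p : MvPolynomial σ R) :
    pderiv i (pderiv j p) = pderiv j (pderiv i p) := by
  classical
  induction p using MvPolynomial.induction_on' with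
  | monomial u a =>
    simp only [pderiv_monomial]
    rw [tsub_right_comm]
    congr 1
    by_cases h : i = j
    · subst h; ring_nf
    · rw [Finsupp.tsub_apply, Finsupp.tsub_apply, Finsupp.single_apply, Finsupp.single_apply,
        if_neg (fun hh => h hh.symm), if_neg (fun hh => h hh)]
      simp; ring
  | add p q hp hq => simp [hp, hq]

open MvPolynomial in
lemma end_comm_rel (N : ℕ) (u v : Fin N × Fin N) :
    (MvPolynomial.pderiv u).toLinearMap * (LinearMap.mulLeft ℂ (MvPolynomial.X v)) =
    (LinearMap.mulLeft ℂ (MvPolynomial.X v)) * (MvPolynomial.pderiv u).toLinearMap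
      + if u = v then (1 : Module.End ℂ (MvPolynomial (Fin N × Fin N) ℂ)) else 0 := by
  ext p
  by_cases h : u = v <;>
  simp [Module.End.mul_apply, LinearMap.mulLeft_apply, pderiv_mul, pderiv_X, h, mul_comm]

namespace Cap

variable {U : Type*} [Ring U] {N n : ℕ}

def E (i : Fin n) (A : Matrix (Fin N) (Fin N) U) :
    Matrix (Fin n → Fin N) (Fin n → Fin N) U := fun a b =>
  if ∀ k, k ≠ i → a k = b k then A (a i) (b i) else 0

def Pm (i k : Fin n) : Matrix (Fin n → Fin N) (Fin n → Fin N) U := fun a b =>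
  if a = b ∘ (Equiv.swap i k) then 1 else 0

lemma sum_update {M : Type*} [AddCommMonoid M] (a : Fin n → Fin N) (i : Fin n)
    (f : (Fin n → Fin N) → M)
    (hf : ∀ c, ¬ (∀ k, k ≠ i → a k = c k) → f c = 0) :
    ∑ c, f c = ∑ m : Fin N, f (Function.update a i m) := by
  classical
  rw [← Finset.sum_filter_of_ne (p := fun c => ∀ k, k ≠ i → a k = c k)
      (fun c _ hc => by by_contra h; exact hc (hf c h))]
  refine Finset.sum_nbij' (fun c => c i) (fun m => Function.update a i m) ?_ ?_ ?_ ?_ ?_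
  · intro c hc; exact Finset.mem_univ _
  · intro m hm
    simp only [Finset.mem_filter, Finset.mem_univ, true_and]
    intro k hk; rw [Function.update_of_ne hk]
  · intro c hc
    simp only [Finset.mem_filter, Finset.mem_univ, true_and] at hc
    show Function.update a i (c i) = c
    funext k
    by_cases h : k = i
    · subst h; simp
    · rw [Function.update_of_ne h]; exact hc k h
  · intro m hm; simp
  · intro c hc
    simp only [Finset.mem_filter, Finset.mem_univ, true_and] at hc
    have : Function.update a i (c i) = c := by
      funext k
      by_cases h : k = i
      · subst h; simp
      · rw [Function.update_of_ne h]; exact hc k h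
    show f c = f (Function.update a i (c i))
    rw [this]

lemma E_apply_update_left (i : Fin n) (A : Matrix (Fin N) (Fin N) U)
    (a : Fin n → Fin N) (m : Fin N) :
    E i A a (Function.update a i m) = A (a i) m := by
  simp only [E]
  rw [if_pos, Function.update_self]
  intro k hk
  rw [Function.update_of_ne hk]

lemma E_mul_same (i : Fin n) (A B : Matrix (Fin N) (Fin N) U) :
    E i A * E i B = E i (A * B) := by
  ext a b
  rw [Matrix.mul_apply]
  rw [sum_update a i (fun c => E i A a c * E i B c b)
      (fun c hc => by simp only [E]; rw [if_neg hc, zero_mul])]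
  simp only [E_apply_update_left]
  by_cases hab : ∀ k, k ≠ i → a k = b k
  · calc ∑ m : Fin N, A (a i) m * E i B (Function.update a i m) b
        = ∑ m : Fin N, A (a i) m * B m (b i) := by
          refine Finset.sum_congr rfl (fun m _ => ?_)
          congr 1
          simp only [E]
          rw [if_pos, Function.update_self]
          intro k hk
          rw [Function.update_of_ne hk]; exact hab k hk
      _ = E i (A * B) a b := by
          simp only [E]; rw [if_pos hab, Matrix.mul_apply]
  · calc ∑ m : Fin N, A (a i) m * E i B (Function.update a i m) b
        = 0 := by
          refine Finset.sum_eq_zero (fun m _ => ?_)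
          simp only [E]
          rw [if_neg, mul_zero]
          intro hh
          exact hab (fun k hk => by rw [← hh k hk, Function.update_of_ne hk])
      _ = E i (A * B) a b := by simp only [E]; rw [if_neg hab]

/-- cross product formula -/
lemma E_mul_ne (i k : Fin n) (h : i ≠ k) (A B : Matrix (Fin N) (Fin N) U) (a b) :
    (E i A * E k B) a b =
      if ∀ l, l ≠ i → l ≠ k → a l = b l then A (a i) (b i) * B (a k) (b k) else 0 := by
  rw [Matrix.mul_apply]
  rw [sum_update a i (fun c => E i A a c * E k B c b)
      (fun c hc => by simp only [E]; rw [if_neg hc, zero_mul])]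
  simp only [E_apply_update_left]
  have h2 : ∀ m : Fin N, E k B (Function.update a i m) b =
      if m = b i ∧ ∀ l, l ≠ i → l ≠ k → a l = b l then B (a k) (b k) else 0 := by
    intro m
    simp only [E]
    by_cases hc : ∀ l, l ≠ k → Function.update a i m l = b l
    · rw [if_pos hc, if_pos, Function.update_of_ne (Ne.symm h)]
      refine ⟨?_, fun l hli hlk => ?_⟩
      · have := hc i h; rwa [Function.update_self] at this
      · have := hc l hlk; rwa [Function.update_of_ne hli] at this
    · rw [if_neg hc, if_neg]
      rintro ⟨hm, hrest⟩
      exact hc (fun l hlk => by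
        by_cases hli : l = i
        · subst hli; rw [Function.update_self]; exact hm
        · rw [Function.update_of_ne hli]; exact hrest l hli hlk)
  simp only [h2, mul_ite, mul_zero]
  by_cases hab : ∀ l, l ≠ i → l ≠ k → a l = b l
  · rw [if_pos hab, Finset.sum_eq_single (b i)]
    · rw [if_pos ⟨rfl, hab⟩]
    · intro m _ hm; rw [if_neg (fun hh => hm hh.1)]
    · intro hmem; exact absurd (Finset.mem_univ _) hmem
  · rw [if_neg hab, Finset.sum_eq_zero]
    intro m _; rw [if_neg (fun hh => hab hh.2)]

lemma swap_invol {α : Type*} [DecidableEq α] (i k : α) (x) :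
    Equiv.swap i k (Equiv.swap i k x) = x := Equiv.swap_apply_self i k x

lemma comp_swap_eq {a c : Fin n → Fin N} {i k : Fin n} (h : a = c ∘ Equiv.swap i k) :
    c = a ∘ Equiv.swap i k := by
  funext l
  have := congrFun h (Equiv.swap i k l)
  simp only [Function.comp_apply, swap_invol] at this ⊢
  exact this.symm

lemma Pm_mul_apply (i k : Fin n) (M : Matrix (Fin n → Fin N) (Fin n → Fin N) U) (a b) :
    ((Pm i k : Matrix (Fin n → Fin N) (Fin n → Fin N) U) * M) a b
      = M (a ∘ Equiv.swap i k) b := by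
  rw [Matrix.mul_apply, Finset.sum_eq_single (a ∘ Equiv.swap i k)]
  · simp only [Pm]
    rw [if_pos, one_mul]
    funext l; simp only [Function.comp_apply, swap_invol]
  · intro c _ hc
    simp only [Pm]
    rw [if_neg, zero_mul]
    intro hh
    exact hc (comp_swap_eq hh)
  · intro hmem; exact absurd (Finset.mem_univ _) hmem

lemma mul_Pm_apply (i k : Fin n) (M : Matrix (Fin n → Fin N) (Fin n → Fin N) U) (a b) :
    (M * (Pm i k : Matrix (Fin n → Fin N) (Fin n → Fin N) U)) a b
      = M a (b ∘ Equiv.swap i k) := by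
  rw [Matrix.mul_apply, Finset.sum_eq_single (b ∘ Equiv.swap i k)]
  · simp [Pm]
  · intro c _ hc
    simp only [Pm]
    rw [if_neg, mul_zero]
    intro hh
    exact hc hh
  · intro hmem; exact absurd (Finset.mem_univ _) hmem

lemma Pm_mul_E (i k j : Fin n) (A : Matrix (Fin N) (Fin N) U) :
    (Pm i k : Matrix (Fin n → Fin N) (Fin n → Fin N) U) * E j A
      = E (Equiv.swap i k j) A * Pm i k := by
  ext a b
  rw [Pm_mul_apply, mul_Pm_apply]
  simp only [E, Function.comp_apply, swap_invol]
  refine if_congr ⟨fun h l hl => ?_, fun h l hl => ?_⟩ rfl rfl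
  · have h1 : Equiv.swap i k l ≠ j := fun hh => hl (by rw [← hh, swap_invol])
    have := h (Equiv.swap i k l) h1
    rwa [swap_invol] at this
  · have h1 : Equiv.swap i k l ≠ Equiv.swap i k j := fun hh =>
      hl (Equiv.injective _ hh)
    have := h (Equiv.swap i k l) h1
    rwa [swap_invol] at this

lemma Pm_mul_E_of_ne (i k j : Fin n) (hji : j ≠ i) (hjk : j ≠ k)
    (A : Matrix (Fin N) (Fin N) U) :
    (Pm i k : Matrix (Fin n → Fin N) (Fin n → Fin N) U) * E j A = E j A * Pm i k := by
  have := Pm_mul_E i k j A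
  rwa [Equiv.swap_apply_of_ne_of_ne hji hjk] at this

lemma Pm_mul_E_right (i k : Fin n) (A : Matrix (Fin N) (Fin N) U) :
    (Pm i k : Matrix (Fin n → Fin N) (Fin n → Fin N) U) * E k A = E i A * Pm i k := by
  have := Pm_mul_E i k k A
  rwa [Equiv.swap_apply_right] at this

lemma E_D_comm (i k : Fin n) (h : i ≠ k) :
    (E i (Dop N) : Matrix (Fin n → Fin N) (Fin n → Fin N) (Wn N)) * E k (Dop N)
      = E k (Dop N) * E i (Dop N) := by
  refine Matrix.ext fun a b => ?_
  rw [E_mul_ne i k h, E_mul_ne k i h.symm]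
  by_cases hc : ∀ l, l ≠ i → l ≠ k → a l = b l
  · rw [if_pos hc, if_pos (fun l h1 h2 => hc l h2 h1)]
    show Dop N (a i) (b i) * Dop N (a k) (b k) = Dop N (a k) (b k) * Dop N (a i) (b i)
    refine LinearMap.ext fun p => ?_
    simp only [Dop, Module.End.mul_apply]
    exact pderiv_pderiv_comm _ _ p
  · rw [if_neg hc, if_neg (fun hh => hc (fun l h1 h2 => hh l h2 h1))]

lemma E_D_mul_E_X (i k : Fin n) (h : i ≠ k) :
    (E i (Dop N) : Matrix (Fin n → Fin N) (Fin n → Fin N) (Wn N)) * E k (Xop N)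
      = E k (Xop N) * E i (Dop N) + Pm i k := by
  refine Matrix.ext fun a b => ?_
  rw [Matrix.add_apply, E_mul_ne i k h, E_mul_ne k i h.symm]
  simp only [Pm]
  by_cases hc : ∀ l, l ≠ i → l ≠ k → a l = b l
  · rw [if_pos hc, if_pos (fun l h1 h2 => hc l h2 h1)]
    show Dop N (a i) (b i) * Xop N (a k) (b k)
      = Xop N (a k) (b k) * Dop N (a i) (b i) + _
    simp only [Dop, Xop]
    rw [end_comm_rel]
    congr 1
    refine if_congr ?_ rfl rfl
    refine ⟨fun hh => funext fun l => ?_, fun hh => ?_⟩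
    · by_cases h1 : l = i
      · subst h1
        simp only [Function.comp_apply, Equiv.swap_apply_left]
        exact congrArg Prod.snd hh
      · by_cases h2 : l = k
        · subst h2
          simp only [Function.comp_apply, Equiv.swap_apply_right]
          exact (congrArg Prod.fst hh).symm
        · simp only [Function.comp_apply, Equiv.swap_apply_of_ne_of_ne h1 h2]
          exact hc l h1 h2
    · have h1 := congrFun hh i
      have h2 := congrFun hh k
      simp only [Function.comp_apply, Equiv.swap_apply_left, Equiv.swap_apply_right] at h1 h2
      rw [Prod.ext_iff]
      exact ⟨h2.symm, h1⟩
  · rw [if_neg hc, if_neg (fun hh => hc (fun l h1 h2 => hh l h2 h1)), if_neg, add_zero]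
    intro hh
    apply hc
    intro l h1 h2
    have := congrFun hh l
    rwa [Function.comp_apply, Equiv.swap_apply_of_ne_of_ne h1 h2] at this

lemma tensorEmb_eq {i : ℕ} (h : i < n) (A : Matrix (Fin N) (Fin N) U) :
    tensorEmb N n i A = E (⟨i, h⟩ : Fin n) A := by
  ext a b
  simp only [tensorEmb, dif_pos h, E]
  refine if_congr ⟨fun hh k hk => ?_, fun hh k hk => ?_⟩ rfl rfl
  · exact hh k (fun hv => hk (Fin.ext hv))
  · exact hh k (fun he => hk (by rw [he]))

lemma permM_map {i k : ℕ} (hi : i < n) (hk : k < n) :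
    (permM N n i k).map (algebraMap ℂ (Wn N))
      = (Pm (⟨i, hi⟩ : Fin n) ⟨k, hk⟩ : Matrix (Fin n → Fin N) (Fin n → Fin N) (Wn N)) := by
  ext a b
  simp only [Matrix.map_apply, permM, Pm, dif_pos (And.intro hi hk), apply_ite,
    _root_.map_one, _root_.map_zero]

lemma jmM_map (N n k : ℕ) :
    (jmM N n k).map (algebraMap ℂ (Wn N))
      = ∑ i ∈ Finset.range k, (permM N n i k).map (algebraMap ℂ (Wn N)) := by
  ext a b
  simp [jmM, Matrix.map_apply, Matrix.sum_apply]


def DP (N n m : ℕ) : Matrix (Fin n → Fin N) (Fin n → Fin N) (Wn N) :=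
  ((List.range m).map (fun k => tensorEmb N n k (Dop N))).prod

lemma DP_succ (N n m : ℕ) :
    DP N n (m+1) = DP N n m * tensorEmb N n m (Dop N) := by
  rw [DP, DP, List.range_succ, List.map_append, List.prod_append]
  simp

lemma lemB (N n : ℕ) (m r : ℕ) (hmr : m ≤ r) (hr : r < n) :
    DP N n m * tensorEmb N n r (Xop N) * tensorEmb N n r (Dop N)
      = tensorEmb N n r (Xop N) * DP N n m * tensorEmb N n r (Dop N)
        + DP N n m * ∑ i ∈ Finset.range m, (permM N n i r).map (algebraMap ℂ (Wn N)) := by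
  induction m with
  | zero => simp [DP]
  | succ m ih =>
    have hmr' : m < r := hmr
    have hmn : m < n := lt_trans hmr' hr
    have hne : (⟨m, hmn⟩ : Fin n) ≠ ⟨r, hr⟩ := by
      intro hh
      exact hmr'.ne (congrArg Fin.val hh)
    rw [DP_succ, Finset.sum_range_succ, tensorEmb_eq hmn, tensorEmb_eq hr, tensorEmb_eq hr,
      permM_map hmn hr]
    rw [tensorEmb_eq hr, tensorEmb_eq hr] at ih
    replace ih := ih (le_of_lt hmr')
    set Q := DP N n m with hQ
    set Dm := (E (⟨m, hmn⟩ : Fin n) (Dop N) : Matrix (Fin n → Fin N) (Fin n → Fin N) (Wn N))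
    set Dr := (E (⟨r, hr⟩ : Fin n) (Dop N) : Matrix (Fin n → Fin N) (Fin n → Fin N) (Wn N))
    set X := (E (⟨r, hr⟩ : Fin n) (Xop N) : Matrix (Fin n → Fin N) (Fin n → Fin N) (Wn N))
    set Pmr := (Pm (⟨m, hmn⟩ : Fin n) ⟨r, hr⟩ : Matrix (Fin n → Fin N) (Fin n → Fin N) (Wn N))
    set S := ∑ i ∈ Finset.range m, (permM N n i r).map (algebraMap ℂ (Wn N)) with hS
    have f1 : Dm * X = X * Dm + Pmr := E_D_mul_E_X _ _ hne
    have f2 : Dm * Dr = Dr * Dm := E_D_comm _ _ hne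
    have f3 : Pmr * Dr = Dm * Pmr := Pm_mul_E_right _ _ _
    have fS : S * Dm = Dm * S := by
      rw [hS, Finset.sum_mul, Finset.mul_sum]
      refine Finset.sum_congr rfl fun i hi => ?_
      have hi' : i < m := Finset.mem_range.mp hi
      have hin : i < n := lt_trans (lt_trans hi' hmr') hr
      rw [permM_map hin hr]
      refine Pm_mul_E_of_ne _ _ _ ?_ ?_ (Dop N)
      · intro hh; exact hi'.ne' (congrArg Fin.val hh)
      · exact hne
    have g1 : Dm * (X * Dr) = X * (Dr * Dm) + Dm * Pmr := by
      rw [← mul_assoc, f1, add_mul, mul_assoc, f2, f3]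
    simp only [mul_assoc] at ih ⊢
    rw [g1, mul_add Q]
    rw [show Q * (X * (Dr * Dm)) = Q * (X * Dr) * Dm by simp only [mul_assoc]]
    rw [ih, add_mul, mul_assoc Q S Dm, fS]
    rw [mul_add Dm S Pmr, mul_add Q (Dm * S) (Dm * Pmr)]
    rw [show X * (Q * Dr) * Dm = X * (Q * (Dm * Dr)) by rw [mul_assoc, mul_assoc, ← f2]]
    rw [add_assoc]

lemma capelli_aux (N n : ℕ) (m : ℕ) (hm : m ≤ n) :
    ((List.range m).map (fun k =>
        tensorEmb N n k (Xop N * Dop N) - (jmM N n k).map (algebraMap ℂ (Wn N)))).prod =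
    ((List.range m).map (fun k => tensorEmb N n k (Xop N))).prod * DP N n m := by
  induction m with
  | zero => simp [DP]
  | succ m ih =>
    have hmn : m < n := hm
    replace ih := ih (le_of_lt hmn)
    rw [List.range_succ, List.map_append, List.prod_append, List.map_append, List.prod_append]
    simp only [List.map_cons, List.map_nil, List.prod_cons, List.prod_nil, mul_one]
    rw [ih, DP_succ]
    have hXD : tensorEmb N n m (Xop N * Dop N)
        = tensorEmb N n m (Xop N) * tensorEmb N n m (Dop N) := by
      rw [tensorEmb_eq hmn, tensorEmb_eq hmn, tensorEmb_eq hmn, E_mul_same]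
    rw [hXD, jmM_map]
    have hB := lemB N n m m le_rfl hmn
    set Q := DP N n m
    set XP := ((List.range m).map (fun k => tensorEmb N n k (Xop N))).prod
    set XX := tensorEmb N n m (Xop N)
    set DD := tensorEmb N n m (Dop N)
    set S := ∑ i ∈ Finset.range m, (permM N n i m).map (algebraMap ℂ (Wn N))
    have key : Q * (XX * DD - S) = XX * (Q * DD) := by
      rw [mul_sub, ← mul_assoc, hB, mul_assoc XX Q DD, add_sub_cancel_right]
    calc XP * Q * (XX * DD - S) = XP * (Q * (XX * DD - S)) := by rw [mul_assoc]
      _ = XP * (XX * (Q * DD)) := by rw [key]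
      _ = XP * XX * (Q * DD) := by rw [mul_assoc]

end Cap

/-- universal matrix Capelli identity for `U(gl_N)`: for every
`n ≥ 1`, in `Mat_N(ℂ)^{⊗n} ⊗ W_N`,
`L₁(L₂ − j₂)⋯(Lₙ − jₙ) = X₁⋯Xₙ D₁⋯Dₙ`, where `L = XD` and
`j_k = Σ_{i=1}^{k-1} P_{ik}` (the first factor carries `j₁ = 0`). -/
theorem universal_matrix_Capelli_glN (N : ℕ) (hN : 1 ≤ N) (n : ℕ) (hn : 1 ≤ n) :
    ((List.range n).map (fun k =>
        tensorEmb N n k (Xop N * Dop N) - (jmM N n k).map (algebraMap ℂ (Wn N)))).prod =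
    ((List.range n).map (fun k => tensorEmb N n k (Xop N))).prod *
      ((List.range n).map (fun k => tensorEmb N n k (Dop N))).prod := by
  exact Cap.capelli_aux N n n le_rfl
end
end

section
/- (Matrix Capelli identity for eigenvectors of the Jucys–Murphy matrices.) Let X and D be the N×N matrices of multiplication and differentiation operators on the polynomial ring in variables x_i^j, and set L = XD. Let n ≥ 1 and let e ∈ Mat_N(ℂ)^{⊗n} be a matrix such that j_k e = c_k e for some scalars c_2, …, c_n ∈ ℂ, where j_k = Σ_{i=1}^{k−1} P_{ik}. Then, in Mat_N(ℂ)^{⊗n} ⊗ W_N, one has L_1 (L_2 − c_2) (L_3 − c_3) ⋯ (L_n − c_n) e = X_1 ⋯ X_n D_1 ⋯ D_n e. (Taking e to be a primitive idempotent P_{ii}^λ of ℂ[S_n] acting on (ℂ^N)^{⊗n}, with c_k the contents of the standard tableau (λ,i), recovers the matrix Capelli identity of Okounkov's quantum immanant theory.) -/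
open Matrix
open scoped Classical

noncomputable section

namespace CapelliAux
open List

variable {N n : ℕ} {U : Type*} [Ring U]

lemma tensorEmb_apply_lt {i : ℕ} (h : i < n)
    (A : Matrix (Fin N) (Fin N) U) (a b : Fin n → Fin N) :
    tensorEmb N n i A a b =
      if ∀ k : Fin n, (k : ℕ) ≠ i → a k = b k then A (a ⟨i, h⟩) (b ⟨i, h⟩) else 0 := by
  simp only [tensorEmb]
  rw [dif_pos h]

lemma permM_apply_lt {i k : ℕ} (hi : i < n) (hk : k < n) (a b : Fin n → Fin N) :
    permM N n i k (U := U) a b =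
      if a = b ∘ (Equiv.swap (⟨i, hi⟩ : Fin n) ⟨k, hk⟩) then 1 else 0 := by
  simp only [permM]
  rw [dif_pos ⟨hi, hk⟩]

lemma tensorEmb_mul_same {i : ℕ} (h : i < n) (A B : Matrix (Fin N) (Fin N) U) :
    tensorEmb N n i A * tensorEmb N n i B = tensorEmb N n i (A * B) := by
  ext a b
  have hIcoe : ((⟨i, h⟩ : Fin n) : ℕ) = i := rfl
  have key : ∀ w : Fin n → Fin N,
      w ∉ Finset.image (fun t => Function.update a ⟨i, h⟩ t) Finset.univ →
      tensorEmb N n i A a w * tensorEmb N n i B w b = 0 := by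
    intro w hw
    rw [tensorEmb_apply_lt h, if_neg, zero_mul]
    intro hcond
    apply hw
    refine Finset.mem_image.2 ⟨w ⟨i, h⟩, Finset.mem_univ _, ?_⟩
    funext j
    by_cases hj : j = (⟨i, h⟩ : Fin n)
    · subst hj; simp
    · rw [Function.update_of_ne hj]
      exact hcond j (fun hji => hj (Fin.ext hji))
  rw [Matrix.mul_apply,
    ← Finset.sum_subset (Finset.subset_univ _) (fun w _ hw => key w hw),
    Finset.sum_image (fun x _ y _ hxy => Function.update_injective _ _ hxy)]
  have h1 : ∀ t, tensorEmb N n i A a (Function.update a ⟨i, h⟩ t) = A (a ⟨i, h⟩) t := by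
    intro t
    rw [tensorEmb_apply_lt h, if_pos, Function.update_self]
    intro k hk
    rw [Function.update_of_ne (fun hkI => hk (by rw [hkI]))]
  have h2 : ∀ t, tensorEmb N n i B (Function.update a ⟨i, h⟩ t) b =
      if ∀ k : Fin n, (k : ℕ) ≠ i → a k = b k then B t (b ⟨i, h⟩) else 0 := by
    intro t
    rw [tensorEmb_apply_lt h, Function.update_self]
    refine if_congr ?_ rfl rfl
    constructor
    · intro hc k hk
      rw [← hc k hk, Function.update_of_ne (fun hkI => hk (by rw [hkI]))]
    · intro hc k hk
      rw [Function.update_of_ne (fun hkI => hk (by rw [hkI]))]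
      exact hc k hk
  simp only [h1, h2]
  rw [tensorEmb_apply_lt h (A * B)]
  split_ifs with hab
  · rw [Matrix.mul_apply]
  · simp

lemma tensorEmb_mul_cross_apply {i k : ℕ} (hi : i < n) (hk : k < n) (hik : i ≠ k)
    (A B : Matrix (Fin N) (Fin N) U) (a b : Fin n → Fin N) :
    (tensorEmb N n i A * tensorEmb N n k B) a b =
      if ∀ j : Fin n, (j : ℕ) ≠ i → (j : ℕ) ≠ k → a j = b j then
        A (a ⟨i, hi⟩) (b ⟨i, hi⟩) * B (a ⟨k, hk⟩) (b ⟨k, hk⟩)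
      else 0 := by
  have hIK : (⟨i, hi⟩ : Fin n) ≠ ⟨k, hk⟩ := fun hc => hik (congrArg Fin.val hc)
  rw [Matrix.mul_apply, Finset.sum_eq_single (Function.update a ⟨i, hi⟩ (b ⟨i, hi⟩))]
  · rw [tensorEmb_apply_lt hi, tensorEmb_apply_lt hk]
    rw [if_pos (fun j hj => (Function.update_of_ne (fun h' => hj (by rw [h'])) _ _).symm)]
    rw [Function.update_self, Function.update_of_ne hIK.symm]
    have hcond : (∀ j : Fin n, (j : ℕ) ≠ k → Function.update a ⟨i, hi⟩ (b ⟨i, hi⟩) j = b j) ↔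
        (∀ j : Fin n, (j : ℕ) ≠ i → (j : ℕ) ≠ k → a j = b j) := by
      constructor
      · intro hc j hji hjk
        rw [← hc j hjk, Function.update_of_ne (fun h' => hji (by rw [h']))]
      · intro hc j hjk
        by_cases hj : j = (⟨i, hi⟩ : Fin n)
        · subst hj; rw [Function.update_self]
        · rw [Function.update_of_ne hj]
          exact hc j (fun h' => hj (Fin.ext h')) hjk
    rw [mul_ite, mul_zero]
    exact if_congr hcond rfl rfl
  · intro w _ hw
    rw [tensorEmb_apply_lt hi, tensorEmb_apply_lt hk]
    by_cases c1 : ∀ j : Fin n, (j : ℕ) ≠ i → a j = w j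
    · by_cases c2 : ∀ j : Fin n, (j : ℕ) ≠ k → w j = b j
      · exfalso; apply hw
        funext j
        by_cases hj : j = (⟨i, hi⟩ : Fin n)
        · subst hj
          rw [Function.update_self]
          exact c2 _ hik
        · rw [Function.update_of_ne hj]
          exact (c1 j (fun h' => hj (Fin.ext h'))).symm
      · rw [if_neg c2, mul_zero]
    · rw [if_neg c1, zero_mul]
  · intro h; exact absurd (Finset.mem_univ _) h


lemma tensorEmb_comm_cross {i k : ℕ} (hi : i < n) (hk : k < n) (hik : i ≠ k)
    (A B : Matrix (Fin N) (Fin N) U)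
    (hAB : ∀ p q r s, A p q * B r s = B r s * A p q) :
    tensorEmb N n i A * tensorEmb N n k B = tensorEmb N n k B * tensorEmb N n i A := by
  ext a b
  rw [tensorEmb_mul_cross_apply hi hk hik, tensorEmb_mul_cross_apply hk hi hik.symm]
  have hc : (∀ j : Fin n, (j : ℕ) ≠ i → (j : ℕ) ≠ k → a j = b j) ↔
      (∀ j : Fin n, (j : ℕ) ≠ k → (j : ℕ) ≠ i → a j = b j) := by
    constructor <;> intro h j h1 h2 <;> exact h j h2 h1
  rw [if_congr hc rfl rfl]
  split_ifs with h
  · exact hAB _ _ _ _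
  · rfl

lemma permM_mul_apply {i k : ℕ} (hi : i < n) (hk : k < n)
    (M : Matrix (Fin n → Fin N) (Fin n → Fin N) U) (a b : Fin n → Fin N) :
    ((permM N n i k : Matrix (Fin n → Fin N) (Fin n → Fin N) U) * M) a b = M (a ∘ Equiv.swap ⟨i, hi⟩ ⟨k, hk⟩) b := by
  rw [Matrix.mul_apply, Finset.sum_eq_single (a ∘ Equiv.swap (⟨i, hi⟩ : Fin n) ⟨k, hk⟩)]
  · rw [permM_apply_lt hi hk, if_pos, one_mul]
    funext j
    simp [Function.comp, Equiv.swap_apply_self]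
  · intro w _ hw
    rw [permM_apply_lt hi hk, if_neg, zero_mul]
    intro hc
    apply hw
    funext j
    have := congrFun hc (Equiv.swap (⟨i, hi⟩ : Fin n) ⟨k, hk⟩ j)
    simpa [Equiv.swap_apply_self] using this.symm
  · intro h; exact absurd (Finset.mem_univ _) h

lemma mul_permM_apply {i k : ℕ} (hi : i < n) (hk : k < n)
    (M : Matrix (Fin n → Fin N) (Fin n → Fin N) U) (a b : Fin n → Fin N) :
    (M * (permM N n i k : Matrix (Fin n → Fin N) (Fin n → Fin N) U)) a b = M a (b ∘ Equiv.swap ⟨i, hi⟩ ⟨k, hk⟩) := by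
  rw [Matrix.mul_apply, Finset.sum_eq_single (b ∘ Equiv.swap (⟨i, hi⟩ : Fin n) ⟨k, hk⟩)]
  · rw [permM_apply_lt hi hk, if_pos rfl, mul_one]
  · intro w _ hw
    rw [permM_apply_lt hi hk, if_neg hw, mul_zero]
  · intro h; exact absurd (Finset.mem_univ _) h

lemma permM_mul_tensorEmb {i k : ℕ} (hi : i < n) (hk : k < n)
    (J : Fin n) (A : Matrix (Fin N) (Fin N) U) :
    permM N n i k * tensorEmb N n (J : ℕ) A =
      tensorEmb N n ((Equiv.swap (⟨i, hi⟩ : Fin n) ⟨k, hk⟩ J : Fin n) : ℕ) A * permM N n i k := by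
  ext a b
  rw [permM_mul_apply hi hk, mul_permM_apply hi hk,
    tensorEmb_apply_lt (J.isLt), tensorEmb_apply_lt ((Equiv.swap (⟨i, hi⟩ : Fin n) ⟨k, hk⟩ J).isLt)]
  simp only [Fin.eta, Function.comp_apply, Equiv.swap_apply_self]
  refine if_congr ?_ rfl rfl
  constructor
  · intro h m hm
    have hne : ((Equiv.swap (⟨i, hi⟩ : Fin n) ⟨k, hk⟩ m : Fin n) : ℕ) ≠ (J : ℕ) := by
      intro hc
      have h1 : Equiv.swap (⟨i, hi⟩ : Fin n) ⟨k, hk⟩ m = J := Fin.ext hc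
      have h2 : m = Equiv.swap (⟨i, hi⟩ : Fin n) ⟨k, hk⟩ J := by
        rw [← h1, Equiv.swap_apply_self]
      exact hm (congrArg Fin.val h2)
    have := h (Equiv.swap (⟨i, hi⟩ : Fin n) ⟨k, hk⟩ m) hne
    simpa [Equiv.swap_apply_self] using this
  · intro h m hm
    have hne : ((Equiv.swap (⟨i, hi⟩ : Fin n) ⟨k, hk⟩ m : Fin n) : ℕ) ≠
        ((Equiv.swap (⟨i, hi⟩ : Fin n) ⟨k, hk⟩ J : Fin n) : ℕ) := by
      intro hc
      have h1 : m = J := (Equiv.swap (⟨i, hi⟩ : Fin n) ⟨k, hk⟩).injective (Fin.ext hc)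
      exact hm (congrArg Fin.val h1)
    have := h (Equiv.swap (⟨i, hi⟩ : Fin n) ⟨k, hk⟩ m) hne
    simpa [Equiv.swap_apply_self] using this


lemma permM_comm_tensorEmb {i k j : ℕ} (hi : i < n) (hk : k < n)
    (hj : j < n) (hji : j ≠ i) (hjk : j ≠ k) (A : Matrix (Fin N) (Fin N) U) :
    Commute (permM N n i k) (tensorEmb N n j A) := by
  have hswap : Equiv.swap (⟨i, hi⟩ : Fin n) ⟨k, hk⟩ ⟨j, hj⟩ = ⟨j, hj⟩ :=
    Equiv.swap_apply_of_ne_of_ne (fun hc => hji (congrArg Fin.val hc))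
      (fun hc => hjk (congrArg Fin.val hc))
  have := permM_mul_tensorEmb hi hk (⟨j, hj⟩ : Fin n) A
  rw [hswap] at this
  exact this

lemma permM_swap_tensorEmb {i k : ℕ} (hi : i < n) (hk : k < n)
    (A : Matrix (Fin N) (Fin N) U) :
    permM N n i k * tensorEmb N n k A = tensorEmb N n i A * permM N n i k := by
  have hswap : Equiv.swap (⟨i, hi⟩ : Fin n) ⟨k, hk⟩ ⟨k, hk⟩ = ⟨i, hi⟩ :=
    Equiv.swap_apply_right _ _
  have := permM_mul_tensorEmb hi hk (⟨k, hk⟩ : Fin n) A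
  rw [hswap] at this
  exact this

lemma pderiv_comm {N : ℕ} (p q : Fin N × Fin N) (f : MvPolynomial (Fin N × Fin N) ℂ) :
    MvPolynomial.pderiv p (MvPolynomial.pderiv q f) =
      MvPolynomial.pderiv q (MvPolynomial.pderiv p f) := by
  induction f using MvPolynomial.induction_on with
  | C a => simp
  | add f g hf hg => simp [hf, hg]
  | mul_X f s hf =>
    simp only [MvPolynomial.pderiv_mul, map_add, MvPolynomial.pderiv_mul, hf]
    have hp : MvPolynomial.pderiv p (MvPolynomial.pderiv q (MvPolynomial.X s :
        MvPolynomial (Fin N × Fin N) ℂ)) = 0 := by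
      rcases eq_or_ne s q with h | h
      · subst h; simp
      · simp [MvPolynomial.pderiv_X_of_ne h]
    have hq : MvPolynomial.pderiv q (MvPolynomial.pderiv p (MvPolynomial.X s :
        MvPolynomial (Fin N × Fin N) ℂ)) = 0 := by
      rcases eq_or_ne s p with h | h
      · subst h; simp
      · simp [MvPolynomial.pderiv_X_of_ne h]
    simp only [MvPolynomial.pderiv_mul, hp, hq, mul_zero, add_zero]
    ring

lemma Xop_entry_comm {N : ℕ} (p q r s : Fin N) :
    Xop N p q * Xop N r s = Xop N r s * Xop N p q := by
  apply LinearMap.ext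
  intro f
  simp only [Xop, Module.End.mul_apply, LinearMap.mulLeft_apply]
  ring

lemma Dop_entry_comm {N : ℕ} (p q r s : Fin N) :
    Dop N p q * Dop N r s = Dop N r s * Dop N p q := by
  apply LinearMap.ext
  intro f
  exact pderiv_comm _ _ f

lemma commute_X_X {a b : ℕ} (ha : a < n) (hb : b < n) (hab : a ≠ b) :
    Commute (tensorEmb N n a (Xop N)) (tensorEmb N n b (Xop N)) :=
  tensorEmb_comm_cross ha hb hab _ _ (fun _ _ _ _ => Xop_entry_comm _ _ _ _)

lemma commute_D_D {a b : ℕ} (ha : a < n) (hb : b < n) (hab : a ≠ b) :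
    Commute (tensorEmb N n a (Dop N)) (tensorEmb N n b (Dop N)) :=
  tensorEmb_comm_cross ha hb hab _ _ (fun _ _ _ _ => Dop_entry_comm _ _ _ _)

lemma pderiv_mul_mulLeft {N : ℕ} (p q : Fin N × Fin N) :
    ((MvPolynomial.pderiv p).toLinearMap : Wn N) * LinearMap.mulLeft ℂ (MvPolynomial.X q) =
      LinearMap.mulLeft ℂ (MvPolynomial.X q) * (MvPolynomial.pderiv p).toLinearMap +
        if p = q then 1 else 0 := by
  apply LinearMap.ext
  intro f
  rcases eq_or_ne p q with h | h
  · subst h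
    simp [Module.End.mul_apply, LinearMap.mulLeft_apply, MvPolynomial.pderiv_mul]
  · simp [Module.End.mul_apply, LinearMap.mulLeft_apply, MvPolynomial.pderiv_mul, h,
      MvPolynomial.pderiv_X_of_ne (Ne.symm h)]

lemma D_mul_X_cross {i k : ℕ} (hi : i < n) (hk : k < n) (hik : i ≠ k) :
    tensorEmb N n i (Dop N) * tensorEmb N n k (Xop N) =
      tensorEmb N n k (Xop N) * tensorEmb N n i (Dop N) +
        (permM N n i k : Matrix (Fin n → Fin N) (Fin n → Fin N) (Wn N)) := by
  ext a b
  rw [Matrix.add_apply, tensorEmb_mul_cross_apply hi hk hik,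
    tensorEmb_mul_cross_apply hk hi hik.symm, permM_apply_lt hi hk]
  have hval : Dop N (a ⟨i, hi⟩) (b ⟨i, hi⟩) * Xop N (a ⟨k, hk⟩) (b ⟨k, hk⟩) =
      Xop N (a ⟨k, hk⟩) (b ⟨k, hk⟩) * Dop N (a ⟨i, hi⟩) (b ⟨i, hi⟩) +
        if (b ⟨i, hi⟩, a ⟨i, hi⟩) = (a ⟨k, hk⟩, b ⟨k, hk⟩) then 1 else 0 :=
    pderiv_mul_mulLeft _ _
  by_cases hpat : ∀ j : Fin n, (j : ℕ) ≠ i → (j : ℕ) ≠ k → a j = b j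
  · have hpat' : ∀ j : Fin n, (j : ℕ) ≠ k → (j : ℕ) ≠ i → a j = b j := fun j h1 h2 => hpat j h2 h1
    rw [if_pos hpat, if_pos hpat', hval]
    congr 1
    by_cases hd : (b ⟨i, hi⟩, a ⟨i, hi⟩) = (a ⟨k, hk⟩, b ⟨k, hk⟩)
    · rw [if_pos hd, if_pos]
      funext j
      rcases Prod.mk.injEq .. ▸ hd with ⟨hd1, hd2⟩
      by_cases hji : j = (⟨i, hi⟩ : Fin n)
      · subst hji
        simp only [Function.comp_apply, Equiv.swap_apply_left]
        exact hd2
      · by_cases hjk : j = (⟨k, hk⟩ : Fin n)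
        · subst hjk
          simp only [Function.comp_apply, Equiv.swap_apply_right]
          exact hd1.symm
        · simp only [Function.comp_apply, Equiv.swap_apply_of_ne_of_ne hji hjk]
          exact hpat j (fun hc => hji (Fin.ext hc)) (fun hc => hjk (Fin.ext hc))
    · rw [if_neg hd, if_neg]
      intro hc
      apply hd
      have h1 := congrFun hc (⟨i, hi⟩ : Fin n)
      have h2 := congrFun hc (⟨k, hk⟩ : Fin n)
      simp only [Function.comp_apply, Equiv.swap_apply_left, Equiv.swap_apply_right] at h1 h2
      exact Prod.ext (by exact h2.symm) (by exact h1)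
  · have hpat' : ¬ ∀ j : Fin n, (j : ℕ) ≠ k → (j : ℕ) ≠ i → a j = b j :=
      fun hc => hpat (fun j h1 h2 => hc j h2 h1)
    rw [if_neg hpat, if_neg hpat', if_neg, add_zero]
    intro hc
    apply hpat
    intro j hji hjk
    have hj1 : j ≠ (⟨i, hi⟩ : Fin n) := fun h' => hji (congrArg Fin.val h')
    have hj2 : j ≠ (⟨k, hk⟩ : Fin n) := fun h' => hjk (congrArg Fin.val h')
    have := congrFun hc j
    simp only [Function.comp_apply, Equiv.swap_apply_of_ne_of_ne hj1 hj2] at this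
    exact this


def DLf (N n : ℕ) : ℕ → Matrix (Fin n → Fin N) (Fin n → Fin N) (Wn N) := fun k =>
  tensorEmb N n k (Dop N)

def XLf (N n : ℕ) : ℕ → Matrix (Fin n → Fin N) (Fin n → Fin N) (Wn N) := fun k =>
  tensorEmb N n k (Xop N)

def Dpr (N n m : ℕ) : Matrix (Fin n → Fin N) (Fin n → Fin N) (Wn N) :=
  ((List.range m).map (DLf N n)).prod

def Xpr (N n m : ℕ) : Matrix (Fin n → Fin N) (Fin n → Fin N) (Wn N) :=
  ((List.range m).map (XLf N n)).prod

def JwW (N n k : ℕ) : Matrix (Fin n → Fin N) (Fin n → Fin N) (Wn N) :=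
  ∑ i ∈ Finset.range k, permM N n i k

lemma DLf_eq (k : ℕ) : DLf N n k = tensorEmb N n k (Dop N) := rfl

lemma permM_comm_listD {i k : ℕ} (hi : i < n) (hk : k < n) (l : List ℕ)
    (hl : ∀ j ∈ l, j < n ∧ j ≠ i ∧ j ≠ k) :
    Commute (permM N n i k) ((l.map (DLf N n)).prod) := by
  apply Commute.list_prod_right
  intro x hx
  obtain ⟨j, hj, rfl⟩ := List.mem_map.1 hx
  obtain ⟨h1, h2, h3⟩ := hl j hj
  exact permM_comm_tensorEmb hi hk h1 h2 h3 _

lemma pairwise_commute_D {m : ℕ} (hm : m ≤ n) :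
    ((List.range m).map (DLf N n)).Pairwise Commute := by
  rw [List.pairwise_map]
  refine ((List.pairwise_lt_range : List.Pairwise (· < ·) (List.range m)).imp_of_mem ?_)
  intro a b ha hb hab
  exact commute_D_D (lt_of_lt_of_le (List.mem_range.1 ha) hm)
    (lt_of_lt_of_le (List.mem_range.1 hb) hm) (Nat.ne_of_lt hab)

lemma Dpr_erase {m i : ℕ} (hm : m ≤ n) (hi : i < m) :
    (((List.range m).erase i).map (DLf N n)).prod * DLf N n i = Dpr N n m := by
  have hperm : List.range m ~ (List.range m).erase i ++ [i] := by
    have h1 : List.range m ~ i :: (List.range m).erase i :=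
      List.perm_cons_erase (List.mem_range.2 hi)
    exact h1.trans (List.perm_append_singleton i _).symm
  have := (hperm.map (DLf N n)).prod_eq' (pairwise_commute_D hm)
  rw [List.map_append] at this
  simpa [List.prod_append, Dpr] using this.symm

lemma Dpr_succ (m : ℕ) : Dpr N n (m + 1) = Dpr N n m * DLf N n m := by
  rw [Dpr, List.range_succ, List.map_append, List.prod_append]
  simp [Dpr]

lemma Xpr_succ (m : ℕ) : Xpr N n (m + 1) = Xpr N n m * XLf N n m := by
  rw [Xpr, List.range_succ, List.map_append, List.prod_append]
  simp [Xpr]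

lemma lemG {m : ℕ} (hm : m < n) : ∀ t, t ≤ m →
    Dpr N n t * XLf N n m =
      XLf N n m * Dpr N n t +
        ∑ i ∈ Finset.range t, permM N n i m * (((List.range t).erase i).map (DLf N n)).prod := by
  intro t
  induction t with
  | zero => intro _; simp [Dpr]
  | succ t ih =>
    intro ht
    have htm : t < m := ht
    have htn : t < n := lt_trans htm hm
    have hcomm : Commute (permM N n t m) (Dpr N n t) := by
      rw [Dpr]
      refine permM_comm_listD htn hm _ ?_
      intro j hj
      have hjt : j < t := List.mem_range.1 hj
      exact ⟨lt_trans hjt htn, Nat.ne_of_lt hjt, Nat.ne_of_lt (lt_trans hjt htm)⟩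
    have hDX : DLf N n t * XLf N n m = XLf N n m * DLf N n t + permM N n t m :=
      D_mul_X_cross htn hm (Nat.ne_of_lt htm)
    have hstep : ∀ i ∈ Finset.range t,
        permM N n i m * (((List.range t).erase i).map (DLf N n)).prod * DLf N n t =
        permM N n i m * (((List.range (t+1)).erase i).map (DLf N n)).prod := by
      intro i hi
      have hit : i < t := Finset.mem_range.1 hi
      have herase : (List.range (t+1)).erase i = (List.range t).erase i ++ [t] := by
        rw [List.range_succ]
        exact List.erase_append_left _ (List.mem_range.2 hit)
      rw [herase, List.map_append, List.prod_append, mul_assoc]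
      simp
    have heraset : (List.range (t+1)).erase t = List.range t := by
      rw [List.range_succ, List.erase_append_right _ (by simp), List.erase_cons_head,
        List.append_nil]
    calc Dpr N n (t+1) * XLf N n m
        = Dpr N n t * (XLf N n m * DLf N n t + permM N n t m) := by
          rw [Dpr_succ, mul_assoc, hDX]
      _ = Dpr N n t * XLf N n m * DLf N n t + Dpr N n t * permM N n t m := by
          rw [mul_add, ← mul_assoc]
      _ = (XLf N n m * Dpr N n t + ∑ i ∈ Finset.range t,
            permM N n i m * (((List.range t).erase i).map (DLf N n)).prod) * DLf N n t
            + permM N n t m * Dpr N n t := by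
          rw [ih (le_of_lt htm), hcomm.eq]
      _ = XLf N n m * Dpr N n (t+1) + ((∑ i ∈ Finset.range t,
            permM N n i m * (((List.range (t+1)).erase i).map (DLf N n)).prod)
            + permM N n t m * (((List.range (t+1)).erase t).map (DLf N n)).prod) := by
          rw [add_mul, Finset.sum_mul, mul_assoc, ← Dpr_succ, Finset.sum_congr rfl hstep,
            heraset, add_assoc]
          rfl
      _ = XLf N n m * Dpr N n (t+1) + ∑ i ∈ Finset.range (t+1),
            permM N n i m * (((List.range (t+1)).erase i).map (DLf N n)).prod := by
          rw [Finset.sum_range_succ]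

lemma lemKey {m : ℕ} (hm : m < n) :
    Dpr N n m * (XLf N n m * DLf N n m) =
      XLf N n m * Dpr N n (m + 1) + Dpr N n m * JwW N n m := by
  have hG := lemG (N := N) hm m le_rfl
  calc Dpr N n m * (XLf N n m * DLf N n m)
      = Dpr N n m * XLf N n m * DLf N n m := by rw [mul_assoc]
    _ = (XLf N n m * Dpr N n m + ∑ i ∈ Finset.range m,
          permM N n i m * (((List.range m).erase i).map (DLf N n)).prod) * DLf N n m := by
        rw [hG]
    _ = XLf N n m * Dpr N n (m+1) + ∑ i ∈ Finset.range m,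
          permM N n i m * (((List.range m).erase i).map (DLf N n)).prod * DLf N n m := by
        rw [add_mul, Finset.sum_mul, mul_assoc, ← Dpr_succ]
    _ = XLf N n m * Dpr N n (m+1) + ∑ i ∈ Finset.range m, Dpr N n m * permM N n i m := by
        congr 1
        refine Finset.sum_congr rfl ?_
        intro i hi
        have him : i < m := Finset.mem_range.1 hi
        have hin : i < n := lt_trans him hm
        have hcomm : Commute (permM N n i m)
            ((((List.range m).erase i).map (DLf N n)).prod) := by
          refine permM_comm_listD hin hm _ ?_
          intro j hj
          have hj' := ((List.nodup_range : (List.range m).Nodup).mem_erase_iff).1 hj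
          have hjm : j < m := List.mem_range.1 hj'.2
          exact ⟨lt_trans hjm hm, hj'.1, Nat.ne_of_lt hjm⟩
        calc permM N n i m * (((List.range m).erase i).map (DLf N n)).prod * DLf N n m
            = (((List.range m).erase i).map (DLf N n)).prod * (permM N n i m * DLf N n m) := by
              rw [hcomm.eq, mul_assoc]
          _ = (((List.range m).erase i).map (DLf N n)).prod * (DLf N n i * permM N n i m) := by
              rw [DLf_eq, DLf_eq, permM_swap_tensorEmb hin hm]
          _ = ((((List.range m).erase i).map (DLf N n)).prod * DLf N n i) * permM N n i m := by
              rw [mul_assoc]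
          _ = Dpr N n m * permM N n i m := by rw [Dpr_erase (le_of_lt hm) him]
    _ = XLf N n m * Dpr N n (m+1) + Dpr N n m * JwW N n m := by
        rw [JwW, Finset.mul_sum]

lemma lemA : ∀ m, m ≤ n → Xpr N n m * Dpr N n m =
    ((List.range m).map (fun k => tensorEmb N n k (Xop N * Dop N) - JwW N n k)).prod := by
  intro m
  induction m with
  | zero => intro _; simp [Xpr, Dpr]
  | succ m ih =>
    intro hm1
    have hm : m < n := hm1
    have h2 : XLf N n m * Dpr N n (m + 1) =
        Dpr N n m * (tensorEmb N n m (Xop N * Dop N) - JwW N n m) := by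
      rw [mul_sub, ← tensorEmb_mul_same hm (Xop N) (Dop N)]
      exact eq_sub_of_add_eq (lemKey hm).symm
    calc Xpr N n (m+1) * Dpr N n (m+1)
        = Xpr N n m * (XLf N n m * Dpr N n (m+1)) := by rw [Xpr_succ, mul_assoc]
      _ = (Xpr N n m * Dpr N n m) * (tensorEmb N n m (Xop N * Dop N) - JwW N n m) := by
          rw [h2, mul_assoc]
      _ = ((List.range m).map (fun k => tensorEmb N n k (Xop N * Dop N) - JwW N n k)).prod *
            (tensorEmb N n m (Xop N * Dop N) - JwW N n m) := by rw [ih (le_of_lt hm)]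
      _ = ((List.range (m+1)).map
            (fun k => tensorEmb N n k (Xop N * Dop N) - JwW N n k)).prod := by
          rw [List.range_succ, List.map_append, List.prod_append]
          simp

lemma jmM_map (k : ℕ) :
    (jmM N n k).map (algebraMap ℂ (Wn N)) = JwW N n k := by
  refine Matrix.ext fun a b => ?_
  simp only [Matrix.map_apply, jmM, JwW, Matrix.sum_apply, map_sum]
  refine Finset.sum_congr rfl fun i _ => ?_
  simp only [permM]
  split_ifs <;> simp

lemma smul_map (c : ℂ) (e : Matrix (Fin n → Fin N) (Fin n → Fin N) ℂ) :
    (c • e).map (algebraMap ℂ (Wn N)) = c • (e.map (algebraMap ℂ (Wn N))) := by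
  refine Matrix.ext fun a b => ?_
  rw [Matrix.map_apply, Matrix.smul_apply, Matrix.smul_apply, Matrix.map_apply, smul_eq_mul,
    _root_.map_mul, ← Algebra.smul_def]


lemma commute_JwW_factor {t k : ℕ} (ht : t < n) (hk : k < n) (htk : t < k) (c : ℂ) :
    Commute (JwW N n t)
      (tensorEmb N n k (Xop N * Dop N) -
        c • (1 : Matrix (Fin n → Fin N) (Fin n → Fin N) (Wn N))) := by
  rw [JwW]
  refine Commute.sum_left _ _ _ fun i hi => ?_
  have hit : i < t := Finset.mem_range.1 hi
  have h1 : Commute (permM N n i t) (tensorEmb N n k (Xop N * Dop N)) :=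
    permM_comm_tensorEmb (lt_trans hit ht) ht hk
      (Nat.ne_of_gt (lt_trans hit htk)) (Nat.ne_of_gt htk) _
  exact h1.sub_right ((Commute.one_right _).smul_right c)

lemma commute_JwW_tail {t : ℕ} (ht : t < n) (c : ℕ → ℂ) :
    Commute (JwW N n t)
      (((List.range' (t + 1) (n - (t + 1))).map
        (fun k => tensorEmb N n k (Xop N * Dop N) -
          c k • (1 : Matrix (Fin n → Fin N) (Fin n → Fin N) (Wn N)))).prod) := by
  refine Commute.list_prod_right _ _ fun x hx => ?_
  obtain ⟨k, hk, rfl⟩ := List.mem_map.1 hx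
  have hk' : t + 1 ≤ k ∧ k < t + 1 + (n - (t + 1)) := List.mem_range'_1.1 hk
  exact commute_JwW_factor ht (by omega) (by omega) (c k)

lemma lemB (e : Matrix (Fin n → Fin N) (Fin n → Fin N) ℂ) (c : ℕ → ℂ)
    (he : ∀ k, k < n → jmM N n k * e = c k • e) :
    ∀ t, t ≤ n →
      ((List.range t).map (fun k => tensorEmb N n k (Xop N * Dop N) - JwW N n k)).prod *
        (((List.range' t (n - t)).map (fun k => tensorEmb N n k (Xop N * Dop N) -
            c k • (1 : Matrix (Fin n → Fin N) (Fin n → Fin N) (Wn N)))).prod *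
          e.map (algebraMap ℂ (Wn N))) =
      ((List.range n).map (fun k => tensorEmb N n k (Xop N * Dop N) -
          c k • (1 : Matrix (Fin n → Fin N) (Fin n → Fin N) (Wn N)))).prod *
        e.map (algebraMap ℂ (Wn N)) := by
  intro t
  induction t with
  | zero =>
    intro _
    have h0 : List.range' 0 (n - 0) = List.range n := by
      rw [Nat.sub_zero, List.range_eq_range']
    rw [h0]
    simp
  | succ t ih =>
    intro ht1
    have ht : t < n := ht1
    have hsplit : List.range' t (n - t) = t :: List.range' (t + 1) (n - (t + 1)) := by
      have h1 : n - t = (n - (t + 1)) + 1 := by omega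
      rw [h1, List.range'_succ]
    rw [← ih (le_of_lt ht), hsplit, List.map_cons, List.prod_cons, List.range_succ,
      List.map_append, List.prod_append, List.map_singleton, List.prod_singleton]
    rw [mul_assoc, mul_assoc]
    congr 1
    set T := ((List.range' (t + 1) (n - (t + 1))).map
      (fun k => tensorEmb N n k (Xop N * Dop N) -
        c k • (1 : Matrix (Fin n → Fin N) (Fin n → Fin N) (Wn N)))).prod with hT
    set E := e.map (algebraMap ℂ (Wn N)) with hE
    have hJE : JwW N n t * E = c t • E := by
      rw [hE, ← jmM_map, ← Matrix.map_mul, he t ht, smul_map]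
    have hct : Commute (JwW N n t) T := by rw [hT]; exact commute_JwW_tail ht c
    calc (tensorEmb N n t (Xop N * Dop N) - JwW N n t) * (T * E)
        = tensorEmb N n t (Xop N * Dop N) * (T * E) - JwW N n t * (T * E) := by
          rw [sub_mul]
      _ = tensorEmb N n t (Xop N * Dop N) * (T * E) - T * (JwW N n t * E) := by
          rw [show JwW N n t * (T * E) = T * (JwW N n t * E) by
            rw [← mul_assoc, hct.eq, mul_assoc]]
      _ = tensorEmb N n t (Xop N * Dop N) * (T * E) - c t • (T * E) := by
          rw [hJE, mul_smul_comm]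
      _ = (tensorEmb N n t (Xop N * Dop N) -
            c t • (1 : Matrix (Fin n → Fin N) (Fin n → Fin N) (Wn N))) * (T * E) := by
          rw [sub_mul, smul_mul_assoc, one_mul]

end CapelliAux

/-- matrix Capelli identity for eigenvectors of the JM matrices:
if `e ∈ Mat_N(ℂ)^{⊗n}` satisfies `j_k e = c_k e` (with `c₁ = 0`, matching
`j₁ = 0`), then `L₁(L₂ − c₂)⋯(Lₙ − cₙ) e = X₁⋯Xₙ D₁⋯Dₙ e` in
`Mat_N(ℂ)^{⊗n} ⊗ W_N`, where `L = XD` and scalars act as scalar matrices. -/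
theorem matrix_Capelli_eigenvector (N : ℕ) (hN : 1 ≤ N) (n : ℕ) (hn : 1 ≤ n)
    (e : Matrix (Fin n → Fin N) (Fin n → Fin N) ℂ) (c : ℕ → ℂ) (hc0 : c 0 = 0)
    (he : ∀ k, k < n → jmM N n k * e = c k • e) :
    ((List.range n).map (fun k =>
        tensorEmb N n k (Xop N * Dop N) -
          c k • (1 : Matrix (Fin n → Fin N) (Fin n → Fin N) (Wn N)))).prod *
        e.map (algebraMap ℂ (Wn N)) =
    ((List.range n).map (fun k => tensorEmb N n k (Xop N))).prod *
      ((List.range n).map (fun k => tensorEmb N n k (Dop N))).prod *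
        e.map (algebraMap ℂ (Wn N)) := by
  have hB := CapelliAux.lemB (N := N) (n := n) e c he n le_rfl
  have hA := CapelliAux.lemA (N := N) (n := n) n le_rfl
  rw [Nat.sub_self] at hB
  simp only [List.range'_zero, List.map_nil, List.prod_nil, one_mul] at hB
  refine hB.symm.trans ?_
  rw [← hA]
  rfl
end
end

section
/- (Capelli identity, trace form.) Let X and D be the N×N matrices of multiplication and differentiation operators on the polynomial ring in variables x_i^j, and set L = XD. Let n ≥ 1 and let e ∈ Mat_N(ℂ)^{⊗n} satisfy j_k e = c_k e for scalars c_2, …, c_n ∈ ℂ, where j_k = Σ_{i=1}^{k−1} P_{ik}. Then, taking the trace over all n matrix tensor components, one has the equality in W_N: Tr_{(1…n)}( L_1 (L_2 − c_2) ⋯ (L_n − c_n) e ) = Tr_{(1…n)}( X_1 ⋯ X_n D_1 ⋯ D_n e ). -/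
open Matrix
open scoped Classical

noncomputable section

section CapelliAux

variable {N n : ℕ}

lemma pderiv_mulLeft_comm {N : ℕ} (p q : Fin N × Fin N) :
    ((MvPolynomial.pderiv p).toLinearMap : Wn N) * LinearMap.mulLeft ℂ (MvPolynomial.X q) =
      LinearMap.mulLeft ℂ (MvPolynomial.X q) * (MvPolynomial.pderiv p).toLinearMap +
        (if q = p then 1 else 0) := by
  apply LinearMap.ext
  intro f
  simp only [LinearMap.add_apply, Module.End.mul_apply, LinearMap.mulLeft_apply,
    Derivation.coeFn_coe, Module.End.one_apply, LinearMap.zero_apply]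
  rw [MvPolynomial.pderiv_mul]
  by_cases h : q = p
  · subst h; simp [add_comm]
  · simp [MvPolynomial.pderiv_X_of_ne h, h]

lemma mulLeft_comm' {N : ℕ} (p q : Fin N × Fin N) :
    (LinearMap.mulLeft ℂ (MvPolynomial.X p) : Wn N) * LinearMap.mulLeft ℂ (MvPolynomial.X q) =
      LinearMap.mulLeft ℂ (MvPolynomial.X q) * LinearMap.mulLeft ℂ (MvPolynomial.X p) := by
  apply LinearMap.ext
  intro f
  simp only [Module.End.mul_apply, LinearMap.mulLeft_apply]
  ring

lemma pderiv_comm' {N : ℕ} (p q : Fin N × Fin N) :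
    ((MvPolynomial.pderiv p).toLinearMap : Wn N) * (MvPolynomial.pderiv q).toLinearMap =
      (MvPolynomial.pderiv q).toLinearMap * (MvPolynomial.pderiv p).toLinearMap := by
  apply LinearMap.ext
  intro f
  simp only [Module.End.mul_apply, Derivation.coeFn_coe]
  induction f using MvPolynomial.induction_on with
  | C a => simp
  | add f g hf hg => simp [hf, hg]
  | mul_X f i hf =>
    simp only [MvPolynomial.pderiv_mul, map_add, MvPolynomial.pderiv_X, Pi.single_apply,
      apply_ite (MvPolynomial.pderiv p), apply_ite (MvPolynomial.pderiv q),
      MvPolynomial.pderiv_one, map_zero, ite_self, mul_zero, add_zero, hf]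
    ring

lemma sum_update {α : Type*} [AddCommMonoid α] (u : Fin n → Fin N) (k : Fin n)
    (g : (Fin n → Fin N) → α) (hg : ∀ w, ¬(∀ j, j ≠ k → u j = w j) → g w = 0) :
    ∑ w, g w = ∑ m, g (Function.update u k m) := by
  classical
  have himg : ∀ w : Fin n → Fin N, (∀ j, j ≠ k → u j = w j) ↔ w = Function.update u k (w k) := by
    intro w
    constructor
    · intro h; funext j
      by_cases hj : j = k
      · subst hj; simp
      · rw [Function.update_of_ne hj]; exact (h j hj).symm
    · intro h j hj
      conv_rhs => rw [h]
      rw [Function.update_of_ne hj]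
  have h1 : ∑ w ∈ Finset.univ.image (Function.update u k), g w
      = ∑ m, g (Function.update u k m) :=
    Finset.sum_image (by intro a _ b _ hab; have := congrFun hab k; simpa using this)
  rw [← h1]
  refine (Finset.sum_subset (Finset.subset_univ _) ?_).symm
  intro w _ hw
  apply hg
  rw [himg w]
  intro hcon
  apply hw
  simp only [Finset.mem_image, Finset.mem_univ, true_and]
  exact ⟨w k, hcon.symm⟩

lemma tensorEmb_mul_same {U : Type*} [Ring U] {k : ℕ} (hk : k < n) (A B : Matrix (Fin N) (Fin N) U) :
    tensorEmb N n k A * tensorEmb N n k B = tensorEmb N n k (A * B) := by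
  ext u v
  rw [Matrix.mul_apply]
  set k' : Fin n := ⟨k, hk⟩ with hk'
  rw [sum_update u k' (fun w => tensorEmb N n k A u w * tensorEmb N n k B w v)
    (by
      intro w hw
      have h0 : tensorEmb N n k A u w = 0 := by
        unfold tensorEmb
        rw [dif_pos hk, if_neg]
        intro hcon
        exact hw (fun j hj => hcon j (by simpa [Fin.ext_iff] using hj))
      rw [h0, zero_mul])]
  unfold tensorEmb
  simp only [dif_pos hk]
  by_cases hcond : ∀ j : Fin n, (j : ℕ) ≠ k → u j = v j
  · rw [if_pos hcond, Matrix.mul_apply]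
    apply Finset.sum_congr rfl
    intro m _
    rw [if_pos, if_pos]
    · simp [← hk']
    · intro j hj
      have hjk : j ≠ k' := by simpa [Fin.ext_iff] using hj
      rw [Function.update_of_ne hjk]
      exact hcond j hj
    · intro j hj
      have hjk : j ≠ k' := by simpa [Fin.ext_iff] using hj
      rw [Function.update_of_ne hjk]
  · rw [if_neg hcond]
    apply Finset.sum_eq_zero
    intro m _
    have hB : ¬ (∀ j : Fin n, (j : ℕ) ≠ k → Function.update u k' m j = v j) := by
      intro hcon
      apply hcond
      intro j hj
      have hjk : j ≠ k' := by simpa [Fin.ext_iff] using hj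
      have := hcon j hj
      rwa [Function.update_of_ne hjk] at this
    rw [if_neg hB, mul_zero]

lemma tensorEmb_mul_ne_apply {U : Type*} [Ring U] {a b : ℕ} (ha : a < n) (hb : b < n)
    (hab : a ≠ b) (A B : Matrix (Fin N) (Fin N) U) (u v : Fin n → Fin N) :
    (tensorEmb N n a A * tensorEmb N n b B) u v =
      if ∀ j : Fin n, (j : ℕ) ≠ a → (j : ℕ) ≠ b → u j = v j
      then A (u ⟨a, ha⟩) (v ⟨a, ha⟩) * B (u ⟨b, hb⟩) (v ⟨b, hb⟩) else 0 := by
  set a' : Fin n := ⟨a, ha⟩ with ha'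
  set b' : Fin n := ⟨b, hb⟩ with hb'
  have hab' : b' ≠ a' := by simp [ha', hb', Fin.ext_iff, Ne.symm hab]
  rw [Matrix.mul_apply, sum_update u a' (fun w => tensorEmb N n a A u w * tensorEmb N n b B w v)
    (by
      intro w hw
      have h0 : tensorEmb N n a A u w = 0 := by
        unfold tensorEmb
        rw [dif_pos ha, if_neg]
        intro hcon
        exact hw (fun j hj => hcon j (by simpa [Fin.ext_iff, ha'] using hj))
      rw [h0, zero_mul])]
  have key : ∀ m : Fin N,
      tensorEmb N n a A u (Function.update u a' m) *
        tensorEmb N n b B (Function.update u a' m) v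
      = if m = v a' then
          (if ∀ j : Fin n, (j : ℕ) ≠ a → (j : ℕ) ≠ b → u j = v j
           then A (u a') (v a') * B (u b') (v b') else 0) else 0 := by
    intro m
    unfold tensorEmb
    simp only [dif_pos ha, dif_pos hb]
    rw [if_pos (by
      intro j hj
      have hjk : j ≠ a' := by simpa [Fin.ext_iff, ha'] using hj
      rw [Function.update_of_ne hjk])]
    have hva : Function.update u a' m a' = m := by simp
    have hvb : Function.update u a' m b' = u b' := Function.update_of_ne hab' _ _
    by_cases hm : m = v a'
    · subst hm
      rw [if_pos rfl]
      by_cases hcond : ∀ j : Fin n, (j : ℕ) ≠ a → (j : ℕ) ≠ b → u j = v j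
      · rw [if_pos hcond, if_pos, hva, hvb]
        intro j hj
        by_cases hja : j = a'
        · subst hja; simp
        · rw [Function.update_of_ne hja]
          exact hcond j (by simpa [Fin.ext_iff, ha'] using hja) hj
      · rw [if_neg hcond, if_neg, mul_zero]
        intro hcon
        apply hcond
        intro j hja hjb
        have hja' : j ≠ a' := by simpa [Fin.ext_iff, ha'] using hja
        have := hcon j hjb
        rwa [Function.update_of_ne hja'] at this
    · rw [if_neg hm, if_neg, mul_zero]
      intro hcon
      apply hm
      have := hcon a' (by simpa [Fin.ext_iff, ha', hb'] using hab)
      rwa [hva] at this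
  calc ∑ m, tensorEmb N n a A u (Function.update u a' m) *
        tensorEmb N n b B (Function.update u a' m) v
      = ∑ m, if m = v a' then
          (if ∀ j : Fin n, (j : ℕ) ≠ a → (j : ℕ) ≠ b → u j = v j
           then A (u a') (v a') * B (u b') (v b') else 0) else 0 :=
        Finset.sum_congr rfl (fun m _ => key m)
    _ = _ := by rw [Finset.sum_ite_eq' Finset.univ (v a')]; simp

lemma permM_mul_apply {U : Type*} [Ring U] {a b : ℕ} (ha : a < n) (hb : b < n)
    (M : Matrix (Fin n → Fin N) (Fin n → Fin N) U) (u v : Fin n → Fin N) :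
    (permM (U := U) N n a b * M) u v = M (u ∘ Equiv.swap (⟨a, ha⟩ : Fin n) ⟨b, hb⟩) v := by
  rw [Matrix.mul_apply]
  unfold permM
  simp only [dif_pos (⟨ha, hb⟩ : a < n ∧ b < n)]
  have hiff : ∀ w : Fin n → Fin N,
      (u = w ∘ (Equiv.swap (⟨a, ha⟩ : Fin n) ⟨b, hb⟩)) ↔
        (w = u ∘ (Equiv.swap (⟨a, ha⟩ : Fin n) ⟨b, hb⟩)) := by
    intro w
    constructor <;> intro h <;> funext j <;>
      · have := congrFun h ((Equiv.swap (⟨a, ha⟩ : Fin n) ⟨b, hb⟩) j)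
        simpa [Function.comp, Equiv.swap_apply_self] using this.symm
  simp only [hiff, ite_mul, one_mul, zero_mul]
  rw [Finset.sum_ite_eq' Finset.univ (u ∘ (Equiv.swap (⟨a, ha⟩ : Fin n) ⟨b, hb⟩)) (fun w => M w v)]
  simp

lemma mul_permM_apply {U : Type*} [Ring U] {a b : ℕ} (ha : a < n) (hb : b < n)
    (M : Matrix (Fin n → Fin N) (Fin n → Fin N) U) (u v : Fin n → Fin N) :
    (M * permM (U := U) N n a b) u v = M u (v ∘ Equiv.swap (⟨a, ha⟩ : Fin n) ⟨b, hb⟩) := by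
  rw [Matrix.mul_apply]
  unfold permM
  simp only [dif_pos (⟨ha, hb⟩ : a < n ∧ b < n), mul_ite, mul_one, mul_zero]
  rw [Finset.sum_ite_eq' Finset.univ (v ∘ (Equiv.swap (⟨a, ha⟩ : Fin n) ⟨b, hb⟩)) (fun w => M u w)]
  simp

lemma swap_fin_eq_iff {a b : ℕ} (ha : a < n) (hb : b < n) (j : Fin n) :
    (Equiv.swap (⟨a, ha⟩ : Fin n) ⟨b, hb⟩) j = ⟨a, ha⟩ ↔ j = ⟨b, hb⟩ := by
  constructor
  · intro h
    have := congrArg (Equiv.swap (⟨a, ha⟩ : Fin n) ⟨b, hb⟩) h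
    simpa [Equiv.swap_apply_self, Equiv.swap_apply_left] using this
  · intro h
    subst h
    exact Equiv.swap_apply_right _ _

lemma swap_fin_eq_iff' {a b : ℕ} (ha : a < n) (hb : b < n) (j : Fin n) :
    (Equiv.swap (⟨a, ha⟩ : Fin n) ⟨b, hb⟩) j = ⟨b, hb⟩ ↔ j = ⟨a, ha⟩ := by
  constructor
  · intro h
    have := congrArg (Equiv.swap (⟨a, ha⟩ : Fin n) ⟨b, hb⟩) h
    simpa [Equiv.swap_apply_self, Equiv.swap_apply_right] using this
  · intro h
    subst h
    exact Equiv.swap_apply_left _ _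

lemma permM_mul_tensorEmb_left {U : Type*} [Ring U] {a b : ℕ} (ha : a < n) (hb : b < n)
    (hab : a ≠ b) (A : Matrix (Fin N) (Fin N) U) :
    permM (U := U) N n a b * tensorEmb N n a A = tensorEmb N n b A * permM (U := U) N n a b := by
  ext u v
  rw [permM_mul_apply ha hb, mul_permM_apply ha hb]
  set s := Equiv.swap (⟨a, ha⟩ : Fin n) ⟨b, hb⟩ with hs
  unfold tensorEmb
  simp only [dif_pos ha, dif_pos hb]
  have hab' : (⟨a, ha⟩ : Fin n) ≠ ⟨b, hb⟩ := by simpa [Fin.ext_iff] using hab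
  refine if_congr ?_ ?_ rfl
  · constructor
    · intro h j hjb
      have hsja : ((s j : Fin n) : ℕ) ≠ a := by
        intro hcon
        have : s j = ⟨a, ha⟩ := by simpa [Fin.ext_iff] using hcon
        rw [swap_fin_eq_iff ha hb] at this
        exact hjb (by simpa [Fin.ext_iff] using this)
      have := h (s j) hsja
      simpa [Function.comp, Equiv.swap_apply_self, hs] using this
    · intro h j hja
      have hsjb : ((s j : Fin n) : ℕ) ≠ b := by
        intro hcon
        have : s j = ⟨b, hb⟩ := by simpa [Fin.ext_iff] using hcon
        rw [swap_fin_eq_iff' ha hb] at this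
        exact hja (by simpa [Fin.ext_iff] using this)
      have := h (s j) hsjb
      simpa [Function.comp, Equiv.swap_apply_self, hs] using this
  · simp [hs, Function.comp, Equiv.swap_apply_left, Equiv.swap_apply_right]

lemma permM_mul_tensorEmb_right {U : Type*} [Ring U] {a b : ℕ} (ha : a < n) (hb : b < n)
    (hab : a ≠ b) (A : Matrix (Fin N) (Fin N) U) :
    permM (U := U) N n a b * tensorEmb N n b A = tensorEmb N n a A * permM (U := U) N n a b := by
  ext u v
  rw [permM_mul_apply ha hb, mul_permM_apply ha hb]
  set s := Equiv.swap (⟨a, ha⟩ : Fin n) ⟨b, hb⟩ with hs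
  unfold tensorEmb
  simp only [dif_pos ha, dif_pos hb]
  refine if_congr ?_ ?_ rfl
  · constructor
    · intro h j hja
      have hsjb : ((s j : Fin n) : ℕ) ≠ b := by
        intro hcon
        have : s j = ⟨b, hb⟩ := by simpa [Fin.ext_iff] using hcon
        rw [swap_fin_eq_iff' ha hb] at this
        exact hja (by simpa [Fin.ext_iff] using this)
      have := h (s j) hsjb
      simpa [Function.comp, Equiv.swap_apply_self, hs] using this
    · intro h j hjb
      have hsja : ((s j : Fin n) : ℕ) ≠ a := by
        intro hcon
        have : s j = ⟨a, ha⟩ := by simpa [Fin.ext_iff] using hcon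
        rw [swap_fin_eq_iff ha hb] at this
        exact hjb (by simpa [Fin.ext_iff] using this)
      have := h (s j) hsja
      simpa [Function.comp, Equiv.swap_apply_self, hs] using this
  · simp [hs, Function.comp, Equiv.swap_apply_left, Equiv.swap_apply_right]

lemma permM_mul_tensorEmb_other {U : Type*} [Ring U] {a b c : ℕ} (ha : a < n) (hb : b < n)
    (hc : c < n) (hca : c ≠ a) (hcb : c ≠ b) (A : Matrix (Fin N) (Fin N) U) :
    permM (U := U) N n a b * tensorEmb N n c A = tensorEmb N n c A * permM (U := U) N n a b := by
  ext u v
  rw [permM_mul_apply ha hb, mul_permM_apply ha hb]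
  set s := Equiv.swap (⟨a, ha⟩ : Fin n) ⟨b, hb⟩ with hs
  unfold tensorEmb
  simp only [dif_pos hc]
  have hsc : s ⟨c, hc⟩ = ⟨c, hc⟩ := by
    rw [hs, Equiv.swap_apply_of_ne_of_ne] <;> simp [Fin.ext_iff, hca, hcb]
  refine if_congr ?_ ?_ rfl
  · constructor
    · intro h j hjc
      have hsjc : ((s j : Fin n) : ℕ) ≠ c := by
        intro hcon
        have h1 : s j = ⟨c, hc⟩ := by simpa [Fin.ext_iff] using hcon
        have h2 : s j = s ⟨c, hc⟩ := by rw [h1, hsc]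
        exact hjc (by simpa [Fin.ext_iff] using s.injective h2)
      have := h (s j) hsjc
      simpa [Function.comp, Equiv.swap_apply_self, hs] using this
    · intro h j hjc
      have hsjc : ((s j : Fin n) : ℕ) ≠ c := by
        intro hcon
        have h1 : s j = ⟨c, hc⟩ := by simpa [Fin.ext_iff] using hcon
        have h2 : s j = s ⟨c, hc⟩ := by rw [h1, hsc]
        exact hjc (by simpa [Fin.ext_iff] using s.injective h2)
      have := h (s j) hsjc
      simpa [Function.comp, Equiv.swap_apply_self, hs] using this
  · simp [Function.comp, hsc]

lemma tensorEmb_comm {U : Type*} [Ring U] {a b : ℕ} (ha : a < n) (hb : b < n) (hab : a ≠ b)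
    (A B : Matrix (Fin N) (Fin N) U) (hcomm : ∀ p q r s, A p q * B r s = B r s * A p q) :
    tensorEmb N n a A * tensorEmb N n b B = tensorEmb N n b B * tensorEmb N n a A := by
  ext u v
  rw [tensorEmb_mul_ne_apply ha hb hab, tensorEmb_mul_ne_apply hb ha hab.symm]
  exact if_congr ⟨fun h j h1 h2 => h j h2 h1, fun h j h1 h2 => h j h2 h1⟩ (hcomm _ _ _ _) rfl

lemma DX_rel {a b : ℕ} (ha : a < n) (hb : b < n) (hab : a ≠ b) :
    tensorEmb N n a (Dop N) * tensorEmb N n b (Xop N) =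
      tensorEmb N n b (Xop N) * tensorEmb N n a (Dop N) + permM (U := Wn N) N n a b := by
  ext u v
  rw [Matrix.add_apply, tensorEmb_mul_ne_apply ha hb hab, tensorEmb_mul_ne_apply hb ha hab.symm]
  set a' : Fin n := ⟨a, ha⟩ with ha'
  set b' : Fin n := ⟨b, hb⟩ with hb'
  set s := Equiv.swap a' b' with hs
  have hperm : permM (U := Wn N) N n a b u v = if u = v ∘ s then 1 else 0 := by
    unfold permM
    rw [dif_pos (⟨ha, hb⟩ : a < n ∧ b < n)]
  rw [hperm]
  have hop : Dop N (u a') (v a') * Xop N (u b') (v b') =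
      Xop N (u b') (v b') * Dop N (u a') (v a') +
        (if ((u b' : Fin N), (v b' : Fin N)) = ((v a' : Fin N), (u a' : Fin N)) then 1 else 0) := by
    unfold Dop Xop
    exact pderiv_mulLeft_comm (v a', u a') (u b', v b')
  by_cases hC : ∀ j : Fin n, (j : ℕ) ≠ a → (j : ℕ) ≠ b → u j = v j
  · have hC2 : ∀ j : Fin n, (j : ℕ) ≠ b → (j : ℕ) ≠ a → u j = v j := fun j h1 h2 => hC j h2 h1
    rw [if_pos hC, if_pos hC2, hop]
    have hiff : (((u b' : Fin N), (v b' : Fin N)) = ((v a' : Fin N), (u a' : Fin N))) ↔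
        (u = v ∘ s) := by
      constructor
      · intro h
        have h1 : u b' = v a' := congrArg Prod.fst h
        have h2 : v b' = u a' := congrArg Prod.snd h
        funext j
        by_cases hja : j = a'
        · subst hja
          rw [Function.comp_apply, hs, Equiv.swap_apply_left]
          exact h2.symm
        · by_cases hjb : j = b'
          · subst hjb
            rw [Function.comp_apply, hs, Equiv.swap_apply_right]
            exact h1
          · have hsj : s j = j := Equiv.swap_apply_of_ne_of_ne hja hjb
            rw [Function.comp_apply, hsj]
            exact hC j (by simpa [Fin.ext_iff, ha'] using hja) (by simpa [Fin.ext_iff, hb'] using hjb)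
      · intro h
        have h1 := congrFun h b'
        have h2 := congrFun h a'
        rw [Function.comp_apply, hs, Equiv.swap_apply_right] at h1
        rw [Function.comp_apply, hs, Equiv.swap_apply_left] at h2
        simp only [Prod.mk.injEq]
        exact ⟨h1, h2.symm⟩
    simp only [hiff]
  · have hC' : ¬ ∀ j : Fin n, (j : ℕ) ≠ b → (j : ℕ) ≠ a → u j = v j :=
      fun h => hC (fun j h1 h2 => h j h2 h1)
    have hP : ¬ (u = v ∘ s) := by
      intro hcon
      apply hC
      intro j hja hjb
      have hsj : s j = j := Equiv.swap_apply_of_ne_of_ne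
        (by simpa [Fin.ext_iff, ha'] using hja) (by simpa [Fin.ext_iff, hb'] using hjb)
      have h3 := congrFun hcon j
      rwa [Function.comp_apply, hsj] at h3
    rw [if_neg hC, if_neg hC', if_neg hP, add_zero]

lemma permM_map {a b : ℕ} :
    (permM (U := ℂ) N n a b).map (algebraMap ℂ (Wn N)) = permM (U := Wn N) N n a b := by
  ext u v : 1
  rw [Matrix.map_apply]
  unfold permM
  split_ifs <;> simp

lemma jmM_map (k : ℕ) :
    (jmM N n k).map (algebraMap ℂ (Wn N)) = ∑ i ∈ Finset.range k, permM (U := Wn N) N n i k := by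
  unfold jmM
  refine Matrix.ext fun u v => ?_
  rw [Matrix.map_apply, Matrix.sum_apply, Matrix.sum_apply, map_sum]
  refine Finset.sum_congr rfl fun i _ => ?_
  rw [← permM_map (N := N) (n := n) (a := i) (b := k), Matrix.map_apply]

lemma map_smul_alg (c : ℂ) (e : Matrix (Fin n → Fin N) (Fin n → Fin N) ℂ) :
    (c • e).map (algebraMap ℂ (Wn N)) = c • (e.map (algebraMap ℂ (Wn N))) := by
  refine Matrix.ext fun u v => ?_
  calc ((c • e).map (algebraMap ℂ (Wn N))) u v
      = algebraMap ℂ (Wn N) (c * e u v) := by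
        rw [Matrix.map_apply, Matrix.smul_apply, smul_eq_mul]
    _ = algebraMap ℂ (Wn N) c * algebraMap ℂ (Wn N) (e u v) :=
        _root_.map_mul (algebraMap ℂ (Wn N)) c (e u v)
    _ = c • (algebraMap ℂ (Wn N)) (e u v) := (Algebra.smul_def c _).symm
    _ = (c • e.map (algebraMap ℂ (Wn N))) u v := by rw [Matrix.smul_apply, Matrix.map_apply]

lemma key_comm : ∀ (m t : ℕ), m ≤ t → t < n →
    tensorEmb N n t (Xop N) * ((List.range m).map (fun k => tensorEmb N n k (Dop N))).prod *
      tensorEmb N n t (Dop N)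
    = ((List.range m).map (fun k => tensorEmb N n k (Dop N))).prod *
      (tensorEmb N n t (Xop N) * tensorEmb N n t (Dop N) -
        ∑ i ∈ Finset.range m, permM (U := Wn N) N n i t) := by
  intro m
  induction m with
  | zero => intro t _ _; simp
  | succ m ih =>
    intro t hmt ht
    have hm_lt_t : m < t := hmt
    have hm : m < n := lt_trans hm_lt_t ht
    have hmt' : m ≠ t := Nat.ne_of_lt hm_lt_t
    rw [List.range_succ, List.map_append, List.prod_append]
    simp only [List.map_cons, List.map_nil, List.prod_cons, List.prod_nil, mul_one]
    set PD := ((List.range m).map (fun k => tensorEmb N n k (Dop N))).prod with hPDdef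
    set Xt := tensorEmb N n t (Xop N)
    set Dt := tensorEmb N n t (Dop N)
    set Dm := tensorEmb N n m (Dop N)
    set J := ∑ i ∈ Finset.range m, permM (U := Wn N) N n i t with hJdef
    set P := permM (U := Wn N) N n m t with hPdef
    have hDD : Dm * Dt = Dt * Dm :=
      tensorEmb_comm hm ht hmt' _ _ (fun p q r s => by
        unfold Dop
        exact pderiv_comm' (q, p) (s, r))
    have hXD : Xt * Dm = Dm * Xt - P := by
      have h := DX_rel (N := N) hm ht hmt'
      rw [show tensorEmb N n m (Dop N) = Dm from rfl,
        show tensorEmb N n t (Xop N) = Xt from rfl, ← hPdef] at h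
      rw [h]
      abel
    have hPD_right : P * Dt = Dm * P := permM_mul_tensorEmb_right hm ht hmt' (Dop N)
    have hJcomm : J * Dm = Dm * J := by
      rw [hJdef, Finset.sum_mul, Finset.mul_sum]
      refine Finset.sum_congr rfl (fun i hi => ?_)
      have hi' : i < m := Finset.mem_range.mp hi
      exact permM_mul_tensorEmb_other (lt_trans hi' hm) ht hm (Nat.ne_of_gt hi') hmt' (Dop N)
    have h2 : Xt * (Dt * Dm) = Dm * (Xt * Dt) - Dm * P := by
      rw [← hDD]
      calc Xt * (Dm * Dt) = (Xt * Dm) * Dt := by rw [mul_assoc]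
        _ = (Dm * Xt - P) * Dt := by rw [hXD]
        _ = Dm * (Xt * Dt) - P * Dt := by rw [sub_mul, mul_assoc]
        _ = Dm * (Xt * Dt) - Dm * P := by rw [hPD_right]
    rw [Finset.sum_range_succ, ← hJdef, ← hPdef]
    calc Xt * (PD * Dm) * Dt
        = Xt * (PD * (Dm * Dt)) := by simp only [mul_assoc]
      _ = Xt * (PD * (Dt * Dm)) := by rw [hDD]
      _ = (Xt * PD * Dt) * Dm := by simp only [mul_assoc]
      _ = (PD * (Xt * Dt - J)) * Dm := by rw [ih t (le_of_lt hm_lt_t) ht]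
      _ = PD * ((Xt * Dt) * Dm) - PD * (J * Dm) := by
          rw [mul_sub, sub_mul]
          simp only [mul_assoc]
      _ = PD * (Xt * (Dt * Dm)) - PD * (Dm * J) := by rw [hJcomm]; simp only [mul_assoc]
      _ = PD * (Dm * (Xt * Dt) - Dm * P) - PD * (Dm * J) := by rw [h2]
      _ = PD * Dm * (Xt * Dt - (J + P)) := by
          simp only [mul_sub, mul_add, mul_assoc]
          abel

lemma stepA : ∀ m, m ≤ n →
    ((List.range m).map (fun k => tensorEmb N n k (Xop N))).prod *
      ((List.range m).map (fun k => tensorEmb N n k (Dop N))).prod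
    = ((List.range m).map (fun k =>
        tensorEmb N n k (Xop N) * tensorEmb N n k (Dop N) -
          ∑ i ∈ Finset.range k, permM (U := Wn N) N n i k)).prod := by
  intro m
  induction m with
  | zero => intro _; simp
  | succ m ih =>
    intro hm
    have hm' : m < n := hm
    rw [List.range_succ, List.map_append, List.map_append, List.map_append,
      List.prod_append, List.prod_append, List.prod_append]
    simp only [List.map_cons, List.map_nil, List.prod_cons, List.prod_nil, mul_one]
    rw [← ih (le_of_lt hm')]
    set PX := ((List.range m).map (fun k => tensorEmb N n k (Xop N))).prod
    set PD := ((List.range m).map (fun k => tensorEmb N n k (Dop N))).prod with hPDdef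
    have hkey := key_comm (N := N) m m (le_refl m) hm'
    rw [← hPDdef] at hkey
    calc PX * tensorEmb N n m (Xop N) * (PD * tensorEmb N n m (Dop N))
        = PX * (tensorEmb N n m (Xop N) * PD * tensorEmb N n m (Dop N)) := by
          simp only [mul_assoc]
      _ = PX * (PD * (tensorEmb N n m (Xop N) * tensorEmb N n m (Dop N) -
            ∑ i ∈ Finset.range m, permM (U := Wn N) N n i m)) := by rw [hkey]
      _ = PX * PD * (tensorEmb N n m (Xop N) * tensorEmb N n m (Dop N) -
            ∑ i ∈ Finset.range m, permM (U := Wn N) N n i m) := by rw [mul_assoc]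

lemma stepB {e : Matrix (Fin n → Fin N) (Fin n → Fin N) ℂ} {c : ℕ → ℂ}
    (he : ∀ k, k < n → jmM N n k * e = c k • e) :
    ∀ d m, m + d = n →
    (((List.range' m d).map (fun k => tensorEmb N n k (Xop N * Dop N) -
        ∑ i ∈ Finset.range k, permM (U := Wn N) N n i k)).prod) *
      (e.map (algebraMap ℂ (Wn N)))
    = (((List.range' m d).map (fun k => tensorEmb N n k (Xop N * Dop N) -
        c k • (1 : Matrix (Fin n → Fin N) (Fin n → Fin N) (Wn N)))).prod) *
      (e.map (algebraMap ℂ (Wn N))) := by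
  intro d
  induction d with
  | zero => intro m _; simp
  | succ d ih =>
    intro m hm
    have hmn : m < n := by omega
    rw [show List.range' m (d + 1) = m :: List.range' (m + 1) d from rfl]
    rw [List.map_cons, List.prod_cons, List.map_cons, List.prod_cons]
    set E := e.map (algebraMap ℂ (Wn N)) with hEdef
    set J := ∑ i ∈ Finset.range m, permM (U := Wn N) N n i m with hJdef
    set Pj := ((List.range' (m + 1) d).map (fun k => tensorEmb N n k (Xop N * Dop N) -
        ∑ i ∈ Finset.range k, permM (U := Wn N) N n i k)).prod
    set Pc := ((List.range' (m + 1) d).map (fun k => tensorEmb N n k (Xop N * Dop N) -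
        c k • (1 : Matrix (Fin n → Fin N) (Fin n → Fin N) (Wn N)))).prod with hPcdef
    rw [mul_assoc, mul_assoc, ih (m + 1) (by omega)]
    have hJE : J * E = c m • E := by
      have h := congrArg (fun M => M.map (algebraMap ℂ (Wn N))) (he m hmn)
      rw [Matrix.map_mul, jmM_map, map_smul_alg] at h
      rw [hJdef, hEdef]
      exact h
    have hJPc : Commute J Pc := by
      apply Commute.list_prod_right
      intro x hx
      obtain ⟨k, hk, rfl⟩ := List.mem_map.mp hx
      have hk' := List.mem_range'_1.mp hk
      have hkn : k < n := by omega
      have hkm : k ≠ m := by omega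
      have hJG : Commute J (tensorEmb N n k (Xop N * Dop N)) := by
        rw [hJdef]
        apply Commute.sum_left
        intro i hi
        have hi' : i < m := Finset.mem_range.mp hi
        have : permM (U := Wn N) N n i m * tensorEmb N n k (Xop N * Dop N) =
            tensorEmb N n k (Xop N * Dop N) * permM (U := Wn N) N n i m :=
          permM_mul_tensorEmb_other (by omega) hmn hkn (by omega) hkm _
        exact this
      exact hJG.sub_right (Commute.smul_right (Commute.one_right J) (c k))
    rw [sub_mul, sub_mul]
    congr 1
    calc J * (Pc * E) = (J * Pc) * E := by rw [mul_assoc]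
      _ = (Pc * J) * E := by rw [hJPc.eq]
      _ = Pc * (J * E) := by rw [mul_assoc]
      _ = Pc * (c m • E) := by rw [hJE]
      _ = c m • (Pc * E) := by rw [mul_smul_comm]
      _ = (c m • (1 : Matrix (Fin n → Fin N) (Fin n → Fin N) (Wn N))) * (Pc * E) := by
          rw [smul_mul_assoc, one_mul]

end CapelliAux

/-- Capelli identity, trace form: if `e ∈ Mat_N(ℂ)^{⊗n}`
satisfies `j_k e = c_k e` (with `c₁ = 0`, matching `j₁ = 0`), then taking the
trace over all `n` matrix tensor components,
`Tr( L₁(L₂ − c₂)⋯(Lₙ − cₙ) e ) = Tr( X₁⋯Xₙ D₁⋯Dₙ e )` holds in `W_N`. -/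
theorem Capelli_trace_form (N : ℕ) (hN : 1 ≤ N) (n : ℕ) (hn : 1 ≤ n)
    (e : Matrix (Fin n → Fin N) (Fin n → Fin N) ℂ) (c : ℕ → ℂ) (hc0 : c 0 = 0)
    (he : ∀ k, k < n → jmM N n k * e = c k • e) :
    Matrix.trace
      (((List.range n).map (fun k =>
          tensorEmb N n k (Xop N * Dop N) -
            c k • (1 : Matrix (Fin n → Fin N) (Fin n → Fin N) (Wn N)))).prod *
        e.map (algebraMap ℂ (Wn N))) =
    Matrix.trace
      (((List.range n).map (fun k => tensorEmb N n k (Xop N))).prod *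
        ((List.range n).map (fun k => tensorEmb N n k (Dop N))).prod *
          e.map (algebraMap ℂ (Wn N))) := by
  classical
  have hA := stepA (N := N) (n := n) n (le_refl n)
  have hB := stepB (N := N) (n := n) he n 0 (by omega)
  rw [← List.range_eq_range'] at hB
  have hconv : ((List.range n).map (fun k =>
      tensorEmb N n k (Xop N) * tensorEmb N n k (Dop N) -
        ∑ i ∈ Finset.range k, permM (U := Wn N) N n i k)).prod
    = ((List.range n).map (fun k => tensorEmb N n k (Xop N * Dop N) -
        ∑ i ∈ Finset.range k, permM (U := Wn N) N n i k)).prod := by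
    congr 1
    apply List.map_congr_left
    intro k hk
    rw [tensorEmb_mul_same (List.mem_range.mp hk)]
  rw [hconv] at hA
  rw [← hB, hA]
end
end

section
/- (Universal quantum matrix Capelli identity.) Let q ∈ ℂ satisfy q^k ≠ 1 for all integers k ≥ 1 (in particular q ≠ 0, ±1), and let R ∈ Mat_N(ℂ) ⊗ Mat_N(ℂ) be a skew-invertible Hecke R-matrix: R satisfies the braid relation R_1R_2R_1 = R_2R_1R_2, the Hecke condition R^2 = 1 + (q − q^{−1})R, and there exists Ψ ∈ Mat_N(ℂ) ⊗ Mat_N(ℂ) with Tr_{(2)}(R_{12}Ψ_{23}) = P_{13} = Tr_{(2)}(Ψ_{12}R_{23}). Let W be a unital associative ℂ-algebra containing N×N matrices M and D of elements satisfying R_1 M_1 R_1 M_1 = M_1 R_1 M_1 R_1, R_1^{−1} D_1 R_1^{−1} D_1 = D_1 R_1^{−1} D_1 R_1^{−1}, and D_1 M_{2̄} = R_1^{−1} + M_{2̄} D_1 R_1^{−2}, where M_{2̄} = R_1 M_1 R_1^{−1}; set L̂ = MD. Then for every integer n ≥ 1, in Mat_N(ℂ)^{⊗n} ⊗ W: L̂_{1̄}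 ( L̂_{2̄} + (J_2^{−1} − 1)/(q − q^{−1}) ) ⋯ ( L̂_{n̄} + (J_n^{−1} − 1)/(q − q^{−1}) ) = M_{1̄} M_{2̄} ⋯ M_{n̄} D_{n̄} ⋯ D_{2̄} D_{1̄} J_1^{−1} J_2^{−1} ⋯ J_n^{−1}, where J_1 = 1 and J_k = R_{k−1} ⋯ R_2 R_1^2 R_2 ⋯ R_{k−1} are the quantum Jucys–Murphy matrices. -/
open Matrix
open scoped Classical

noncomputable section

/-- For a matrix `R ∈ Mat_N ⊗ Mat_N` over `U` (indexed by pairs), the element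
`R_i` of `Mat_N^{⊗n} ⊗ U` acting as `R` in the `i`-th and `(i+1)`-th tensor
factors (0-based) and as the identity elsewhere.  (If out of range it is the
identity.) -/
def embR {U : Type*} [Ring U] (N n : ℕ)
    (R : Matrix (Fin N × Fin N) (Fin N × Fin N) U) (i : ℕ) :
    Matrix (Fin n → Fin N) (Fin n → Fin N) U := fun a b =>
  if h : i + 1 < n then
    if ∀ k : Fin n, (k : ℕ) ≠ i → (k : ℕ) ≠ i + 1 → a k = b k then
      R (a ⟨i, Nat.lt_of_succ_lt h⟩, a ⟨i + 1, h⟩)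
        (b ⟨i, Nat.lt_of_succ_lt h⟩, b ⟨i + 1, h⟩)
    else 0
  else if a = b then 1 else 0

/-- `A_{k̄} = R_{k−1}⋯R_1 A_1 R_1^{−1}⋯R_{k−1}^{−1}` (0-based: `Abar 0 = A_1`,
`Abar (k+1) = R_{k} · Abar k · R_{k}^{−1}` with 0-based `R`-positions). -/
def Abar (N n : ℕ) {W : Type*} [Ring W]
    (RW RWi : Matrix (Fin N × Fin N) (Fin N × Fin N) W)
    (A : Matrix (Fin N) (Fin N) W) :
    ℕ → Matrix (Fin n → Fin N) (Fin n → Fin N) W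
  | 0 => tensorEmb N n 0 A
  | k + 1 => embR N n RW k * Abar N n RW RWi A k * embR N n RWi k

/-- The quantum Jucys–Murphy matrices (0-based): `J 0 = 1` and
`J (k+1) = R_k · J k · R_k`, i.e. `J_k = R_{k−1}⋯R_2 R_1² R_2⋯R_{k−1}`
in 1-based notation. -/
def Jm (N n : ℕ) (R : Matrix (Fin N × Fin N) (Fin N × Fin N) ℂ) :
    ℕ → Matrix (Fin n → Fin N) (Fin n → Fin N) ℂ
  | 0 => 1
  | k + 1 => embR N n R k * Jm N n R k * embR N n R k

/-- Partial trace `Tr_{(2)}` over the middle tensor component of an element of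
`Mat_N(ℂ)^{⊗3}`, landing in `Mat_N(ℂ) ⊗ Mat_N(ℂ)` (factors 1 and 3). -/
def ptr2 (N : ℕ) (A : Matrix (Fin 3 → Fin N) (Fin 3 → Fin N) ℂ) :
    Matrix (Fin N × Fin N) (Fin N × Fin N) ℂ := fun p r =>
  ∑ m : Fin N, A ![p.1, m, p.2] ![r.1, m, r.2]

/-- The permutation matrix `P₁₃ ∈ Mat_N(ℂ) ⊗ Mat_N(ℂ)` (viewed in factors 1
and 3), exchanging the two factors. -/
def swap13 (N : ℕ) : Matrix (Fin N × Fin N) (Fin N × Fin N) ℂ := fun p r =>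
  if p.1 = r.2 ∧ p.2 = r.1 then 1 else 0


section RingAux
variable {A : Type*} [Ring A]

lemma cancel_left {y y' a b : A} (hy' : y' * y = 1) (h : y * a = y * b) : a = b := by
  have := congrArg (fun z => y' * z) h
  simpa [← mul_assoc, hy'] using this

lemma comm_of_comm_inv {x x' X : A} (h1 : x * x' = 1) (h2 : x' * x = 1)
    (h : x * X = X * x) : x' * X = X * x' := by
  have : x' * (x * X) * x' = x' * (X * x) * x' := by rw [h]
  calc x' * X = x' * X * (x * x') := by rw [h1, mul_one]
    _ = x' * (X * x) * x' := by noncomm_ring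
    _ = x' * (x * X) * x' := by rw [h]
    _ = (x' * x) * X * x' := by noncomm_ring
    _ = X * x' := by rw [h2, one_mul]

lemma inv_unique_aux {a b c : A} (h1 : a * b = 1) (h2 : b * a = 1) (h3 : a * c = 1) : b = c := by
  calc b = b * (a * c) := by rw [h3, mul_one]
    _ = (b * a) * c := by rw [mul_assoc]
    _ = c := by rw [h2, one_mul]

/-- From braid `xyx = yxy` get the inverse braid `x'y'x' = y'x'y'`. -/
lemma braid_inv {x y x' y' : A} (hx : x * x' = 1) (hx' : x' * x = 1)
    (hy : y * y' = 1) (hy' : y' * y = 1)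
    (hb : x * y * x = y * x * y) : x' * y' * x' = y' * x' * y' := by
  have k1 : (x * y * x) * (x' * y' * x') = 1 := by
    calc (x * y * x) * (x' * y' * x') = x * y * (x * x') * y' * x' := by noncomm_ring
      _ = x * (y * y') * x' := by rw [hx]; noncomm_ring
      _ = x * x' := by rw [hy]; noncomm_ring
      _ = 1 := hx
  have k2 : (x' * y' * x') * (x * y * x) = 1 := by
    calc (x' * y' * x') * (x * y * x) = x' * y' * (x' * x) * y * x := by noncomm_ring
      _ = x' * (y' * y) * x := by rw [hx']; noncomm_ring
      _ = x' * x := by rw [hy']; noncomm_ring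
      _ = 1 := hx'
  have k3 : (x * y * x) * (y' * x' * y') = 1 := by
    rw [hb]
    calc (y * x * y) * (y' * x' * y') = y * x * (y * y') * x' * y' := by noncomm_ring
      _ = y * (x * x') * y' := by rw [hy]; noncomm_ring
      _ = y * y' := by rw [hx]; noncomm_ring
      _ = 1 := hy
  exact inv_unique_aux k1 k2 k3

/-- From braid `xyx = yxy` get `y x' y' = x' y' x`. -/
lemma braid_mixed {x y x' y' : A} (hx : x * x' = 1) (hx' : x' * x = 1)
    (hy : y * y' = 1) (hy' : y' * y = 1)
    (hb : x * y * x = y * x * y) : y * x' * y' = x' * y' * x := by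
  have step1 : y * (x * y * x') = x * y := by
    calc y * (x * y * x') = (y * x * y) * x' := by noncomm_ring
      _ = (x * y * x) * x' := by rw [hb]
      _ = x * y * (x * x') := by noncomm_ring
      _ = x * y := by rw [hx, mul_one]
  have step2 : x * y * x' = y' * (x * y) := by
    apply cancel_left hy'
    rw [step1, ← mul_assoc, hy, one_mul]
  -- conclude: x' * (x*y*x') * y' = x' * y' * x * y * y'
  calc y * x' * y' = (x' * x) * (y * x') * y' := by rw [hx']; noncomm_ring
    _ = x' * (x * y * x') * y' := by noncomm_ring
    _ = x' * (y' * (x * y)) * y' := by rw [step2]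
    _ = x' * y' * x * (y * y') := by noncomm_ring
    _ = x' * y' * x := by rw [hy, mul_one]

end RingAux

section SumExtend
variable {α β X γ : Type*} [AddCommMonoid γ]

lemma sum_extend [Fintype (α → X)] [Fintype (β → X)] (ρ : β → α) (hρ : Function.Injective ρ) (a : α → X)
    (f : (α → X) → γ)
    (hf : ∀ c, ¬ (∀ k, (∀ j, ρ j ≠ k) → a k = c k) → f c = 0) :
    ∑ c, f c = ∑ d : β → X, f (Function.extend ρ d a) := by
  classical
  have hagree : ∀ d : β → X, ∀ k, (∀ j, ρ j ≠ k) → a k = Function.extend ρ d a k := by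
    intro d k hk
    rw [Function.extend_apply' _ _ _ (by rintro ⟨j, hj⟩; exact hk j hj)]
  rw [← Finset.sum_filter_of_ne (p := fun c => ∀ k, (∀ j, ρ j ≠ k) → a k = c k)
      (by intro c _ hc; by_contra h; exact hc (hf c h))]
  refine Finset.sum_bij' (fun c _ => c ∘ ρ) (fun d _ => Function.extend ρ d a) ?_ ?_ ?_ ?_ ?_
  · intro c hc; exact Finset.mem_univ _
  · intro d _; simp only [Finset.mem_filter, Finset.mem_univ, true_and]; exact hagree d
  · intro c hc
    simp only [Finset.mem_filter, Finset.mem_univ, true_and] at hc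
    funext k
    by_cases h : ∃ j, ρ j = k
    · obtain ⟨j, rfl⟩ := h
      rw [hρ.extend_apply]; rfl
    · rw [Function.extend_apply' _ _ _ h]
      exact hc k (fun j hj => h ⟨j, hj⟩)
  · intro d _
    funext j
    simp [hρ.extend_apply]
  · intro c hc
    congr 1
    funext k
    by_cases h : ∃ j, ρ j = k
    · obtain ⟨j, rfl⟩ := h; rw [hρ.extend_apply]; rfl
    · simp only [Finset.mem_filter, Finset.mem_univ, true_and] at hc
      rw [Function.extend_apply' _ _ _ h]
      exact (hc k (fun j hj => h ⟨j, hj⟩)).symm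

end SumExtend

section Place
variable {U : Type*} [Ring U]

/-- Place an `m`-leg matrix into `n` legs along `ρ`. -/
def place (N n m : ℕ) (ρ : Fin m → Fin n)
    (X : Matrix (Fin m → Fin N) (Fin m → Fin N) U) :
    Matrix (Fin n → Fin N) (Fin n → Fin N) U := fun a b =>
  if ∀ k, (∀ j, ρ j ≠ k) → a k = b k then X (a ∘ ρ) (b ∘ ρ) else 0

variable {N n m m' : ℕ}

lemma place_mul {ρ : Fin m → Fin n} (hρ : Function.Injective ρ)
    (X Y : Matrix (Fin m → Fin N) (Fin m → Fin N) U) :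
    place N n m ρ X * place N n m ρ Y = place N n m ρ (X * Y) := by
  ext a b
  simp only [Matrix.mul_apply, place]
  refine (sum_extend ρ hρ a _ (fun c hc => by rw [if_neg hc, zero_mul])).trans ?_
  have h1 : ∀ d : Fin m → Fin N,
      (∀ k, (∀ j, ρ j ≠ k) → a k = Function.extend ρ d a k) := by
    intro d k hk
    rw [Function.extend_apply' _ _ _ (by rintro ⟨j, hj⟩; exact hk j hj)]
  have h2 : ∀ d : Fin m → Fin N, Function.extend ρ d a ∘ ρ = d := by
    intro d; funext j; simp [hρ.extend_apply]
  have h3 : ∀ d : Fin m → Fin N,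
      (∀ k, (∀ j, ρ j ≠ k) → Function.extend ρ d a k = b k) ↔
      (∀ k, (∀ j, ρ j ≠ k) → a k = b k) := by
    intro d
    constructor
    · intro h k hk; rw [h1 d k hk]; exact h k hk
    · intro h k hk; rw [← h1 d k hk]; exact h k hk
  by_cases hab : ∀ k, (∀ j, ρ j ≠ k) → a k = b k
  · rw [if_pos hab]
    calc ∑ d : Fin m → Fin N,
        (if ∀ k, (∀ j, ρ j ≠ k) → a k = Function.extend ρ d a k then
          X (a ∘ ρ) (Function.extend ρ d a ∘ ρ) else 0) *
        (if ∀ k, (∀ j, ρ j ≠ k) → Function.extend ρ d a k = b k then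
          Y (Function.extend ρ d a ∘ ρ) (b ∘ ρ) else 0)
        = ∑ d : Fin m → Fin N, X (a ∘ ρ) d * Y d (b ∘ ρ) := by
          apply Finset.sum_congr rfl
          intro d _
          rw [if_pos (h1 d), if_pos ((h3 d).mpr hab), h2 d]
      _ = (X * Y) (a ∘ ρ) (b ∘ ρ) := (Matrix.mul_apply).symm
  · rw [if_neg hab]
    apply Finset.sum_eq_zero
    intro d _
    rw [if_neg (fun h => hab ((h3 d).mp h)), mul_zero]

lemma place_add {ρ : Fin m → Fin n} (X Y : Matrix (Fin m → Fin N) (Fin m → Fin N) U) :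
    place N n m ρ (X + Y) = place N n m ρ X + place N n m ρ Y := by
  ext a b
  simp only [place, Matrix.add_apply]
  split <;> simp

lemma place_comp {ρ : Fin m → Fin n} (hρ : Function.Injective ρ)
    (σ : Fin m' → Fin m) (X : Matrix (Fin m' → Fin N) (Fin m' → Fin N) U) :
    place N n m ρ (place N m m' σ X) = place N n m' (ρ ∘ σ) X := by
  ext a b
  simp only [place, Function.comp]
  by_cases h : ∀ k, (∀ j, ρ (σ j) ≠ k) → a k = b k
  · have h1 : ∀ k, (∀ j, ρ j ≠ k) → a k = b k := by
      intro k hk; exact h k (fun j => hk (σ j))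
    have h2 : ∀ k', (∀ j, σ j ≠ k') → a (ρ k') = b (ρ k') := by
      intro k' hk'; exact h (ρ k') (fun j hj => hk' j (hρ hj))
    rw [if_pos h, if_pos h1, if_pos h2]
    rfl
  · rw [if_neg h]
    by_cases h1 : ∀ k, (∀ j, ρ j ≠ k) → a k = b k
    · rw [if_pos h1]
      rw [if_neg]
      intro h2
      apply h
      intro k hk
      by_cases hin : ∃ k', ρ k' = k
      · obtain ⟨k', rfl⟩ := hin
        exact h2 k' (fun j hj => hk j (by rw [hj]))
      · exact h1 k (fun j hj => hin ⟨j, hj⟩)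
    · rw [if_neg h1]

lemma place_mul_disjoint {ρ : Fin m → Fin n} {ρ' : Fin m' → Fin n}
    (hρ : Function.Injective ρ)
    (hdisj : ∀ j j', ρ j ≠ ρ' j')
    (X : Matrix (Fin m → Fin N) (Fin m → Fin N) U)
    (Y : Matrix (Fin m' → Fin N) (Fin m' → Fin N) U) :
    place N n m ρ X * place N n m' ρ' Y = fun a b =>
      if ∀ k, (∀ j, ρ j ≠ k) → (∀ j', ρ' j' ≠ k) → a k = b k then
        X (a ∘ ρ) (b ∘ ρ) * Y (a ∘ ρ') (b ∘ ρ') else 0 := by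
  ext a b
  simp only [Matrix.mul_apply, place]
  refine (sum_extend ρ hρ a _ (fun c hc => by rw [if_neg hc, zero_mul])).trans ?_
  have h1 : ∀ d : Fin m → Fin N,
      (∀ k, (∀ j, ρ j ≠ k) → a k = Function.extend ρ d a k) := by
    intro d k hk
    rw [Function.extend_apply' _ _ _ (by rintro ⟨j, hj⟩; exact hk j hj)]
  have h2 : ∀ d : Fin m → Fin N, Function.extend ρ d a ∘ ρ = d := by
    intro d; funext j; simp [hρ.extend_apply]
  have h2' : ∀ d : Fin m → Fin N, Function.extend ρ d a ∘ ρ' = a ∘ ρ' := by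
    intro d; funext j'
    exact Function.extend_apply' _ _ _ (by rintro ⟨j, hj⟩; exact hdisj j j' hj)
  -- second indicator for c = extend ρ d a:
  have h3 : ∀ d : Fin m → Fin N,
      (∀ k, (∀ j', ρ' j' ≠ k) → Function.extend ρ d a k = b k) ↔
      ((∀ k, (∀ j, ρ j ≠ k) → (∀ j', ρ' j' ≠ k) → a k = b k) ∧ d = b ∘ ρ) := by
    intro d
    constructor
    · intro h
      constructor
      · intro k hk hk'
        rw [h1 d k hk]; exact h k hk'
      · funext j
        have := h (ρ j) (fun j' hj' => (hdisj j j' hj'.symm))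
        rw [hρ.extend_apply] at this
        exact this
    · rintro ⟨hab, rfl⟩
      intro k hk'
      by_cases hin : ∃ j, ρ j = k
      · obtain ⟨j, rfl⟩ := hin
        rw [hρ.extend_apply]; rfl
      · rw [Function.extend_apply' _ _ _ hin]
        exact hab k (fun j hj => hin ⟨j, hj⟩) hk'
  by_cases hab : ∀ k, (∀ j, ρ j ≠ k) → (∀ j', ρ' j' ≠ k) → a k = b k
  · rw [if_pos hab]
    rw [Finset.sum_eq_single (b ∘ ρ)]
    · rw [if_pos (h1 _), if_pos ((h3 _).mpr ⟨hab, rfl⟩), h2, h2']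
    · intro d _ hd
      by_cases hcond : ∀ k, (∀ j', ρ' j' ≠ k) → Function.extend ρ d a k = b k
      · exact absurd ((h3 d).mp hcond).2 hd
      · rw [if_neg hcond, mul_zero]
    · intro h; exact absurd (Finset.mem_univ _) h
  · rw [if_neg hab]
    apply Finset.sum_eq_zero
    intro d _
    rw [if_neg (fun h => hab ((h3 d).mp h).1), mul_zero]

lemma place_comm {ρ : Fin m → Fin n} {ρ' : Fin m' → Fin n}
    (hρ : Function.Injective ρ) (hρ' : Function.Injective ρ')
    (hdisj : ∀ j j', ρ j ≠ ρ' j')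
    (X : Matrix (Fin m → Fin N) (Fin m → Fin N) U)
    (Y : Matrix (Fin m' → Fin N) (Fin m' → Fin N) U)
    (hcomm : ∀ p q p' q', Commute (X p q) (Y p' q')) :
    place N n m ρ X * place N n m' ρ' Y = place N n m' ρ' Y * place N n m ρ X := by
  rw [place_mul_disjoint hρ hdisj, place_mul_disjoint hρ' (fun j j' => (hdisj j' j).symm)]
  ext a b
  by_cases h : ∀ k, (∀ j, ρ j ≠ k) → (∀ j', ρ' j' ≠ k) → a k = b k
  · rw [if_pos h, if_pos (fun k h1 h2 => h k h2 h1), (hcomm _ _ _ _)]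
  · rw [if_neg h, if_neg (fun hh => h (fun k h1 h2 => hh k h2 h1))]

end Place

section Emb
variable {U : Type*} [Ring U] {N n : ℕ}

/-- one-leg matrix -/
def leg1 (N : ℕ) {U : Type*} [Ring U] (A : Matrix (Fin N) (Fin N) U) :
    Matrix (Fin 1 → Fin N) (Fin 1 → Fin N) U := fun a b => A (a 0) (b 0)

/-- two-leg matrix -/
def pair2 (N : ℕ) {U : Type*} [Ring U] (S : Matrix (Fin N × Fin N) (Fin N × Fin N) U) :
    Matrix (Fin 2 → Fin N) (Fin 2 → Fin N) U := fun a b => S (a 0, a 1) (b 0, b 1)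

lemma leg1_mul (A B : Matrix (Fin N) (Fin N) U) :
    leg1 N (A * B) = leg1 N A * leg1 N B := by
  ext a b
  simp only [leg1, Matrix.mul_apply]
  exact Fintype.sum_equiv (Equiv.funUnique (Fin 1) (Fin N)).symm _ _ (by intro x; rfl)

lemma pair2_mul (A B : Matrix (Fin N × Fin N) (Fin N × Fin N) U) :
    pair2 N (A * B) = pair2 N A * pair2 N B := by
  ext a b
  simp only [pair2, Matrix.mul_apply]
  exact Fintype.sum_equiv (piFinTwoEquiv (fun _ => Fin N)).symm _ _ (by intro x; rfl)

lemma tensorEmb_eq_place {i : ℕ} (h : i < n) (A : Matrix (Fin N) (Fin N) U) :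
    tensorEmb N n i A = place N n 1 (fun _ => ⟨i, h⟩) (leg1 N A) := by
  ext a b
  simp only [tensorEmb, place, leg1, dif_pos h]
  refine if_congr ?_ rfl rfl
  constructor
  · intro hc k hk
    exact hc k (fun he => hk 0 (by ext; exact he.symm))
  · intro hc k hk
    exact hc k (fun j hj => hk (by rw [← hj]))

lemma embR_eq_place {i : ℕ} (h : i + 1 < n) (S : Matrix (Fin N × Fin N) (Fin N × Fin N) U) :
    embR N n S i = place N n 2 ![⟨i, Nat.lt_of_succ_lt h⟩, ⟨i + 1, h⟩] (pair2 N S) := by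
  ext a b
  simp only [embR, place, pair2, dif_pos h]
  have e0 : (![⟨i, Nat.lt_of_succ_lt h⟩, ⟨i + 1, h⟩] : Fin 2 → Fin n) 0 = ⟨i, Nat.lt_of_succ_lt h⟩ := rfl
  refine if_congr ?_ rfl rfl
  constructor
  · intro hc k hk
    refine hc k ?_ ?_
    · intro he; exact hk 0 (by ext; exact he.symm)
    · intro he; exact hk 1 (by ext; exact he.symm)
  · intro hc k h0 h1
    refine hc k ?_
    intro j hj
    fin_cases j
    · exact h0 (by rw [← hj]; rfl)
    · exact h1 (by rw [← hj]; rfl)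

lemma embR_out {i : ℕ} (h : ¬ i + 1 < n) (S : Matrix (Fin N × Fin N) (Fin N × Fin N) U) :
    embR N n S i = 1 := by
  ext a b
  simp only [embR, dif_neg h, Matrix.one_apply]

lemma inj2 {i : ℕ} (h : i + 1 < n) :
    Function.Injective (![⟨i, Nat.lt_of_succ_lt h⟩, ⟨i + 1, h⟩] : Fin 2 → Fin n) := by
  intro x y hxy
  fin_cases x <;> fin_cases y <;> simp_all [Fin.ext_iff]

lemma embR_mul (S T : Matrix (Fin N × Fin N) (Fin N × Fin N) U) (i : ℕ) :
    embR N n S i * embR N n T i = embR N n (S * T) i := by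
  by_cases h : i + 1 < n
  · rw [embR_eq_place h, embR_eq_place h, embR_eq_place h, place_mul (inj2 h), pair2_mul]
  · rw [embR_out h, embR_out h, embR_out h, one_mul]

lemma embR_one (i : ℕ) : embR N n (1 : Matrix (Fin N × Fin N) (Fin N × Fin N) U) i = 1 := by
  ext a b
  simp only [embR, Matrix.one_apply]
  by_cases h : i + 1 < n
  · rw [dif_pos h]
    by_cases hc : ∀ k : Fin n, (k : ℕ) ≠ i → (k : ℕ) ≠ i + 1 → a k = b k
    · rw [if_pos hc]
      by_cases hab : a = b
      · subst hab; simp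
      · rw [if_neg hab, if_neg]
        intro he
        obtain ⟨he1, he2⟩ := Prod.mk.inj he
        apply hab
        funext k
        by_cases h0 : (k : ℕ) = i
        · have hk : k = ⟨i, Nat.lt_of_succ_lt h⟩ := by ext; exact h0
          subst hk; exact he1
        · by_cases h1 : (k : ℕ) = i + 1
          · have hk : k = ⟨i + 1, h⟩ := by ext; exact h1
            subst hk; exact he2
          · exact hc k h0 h1
    · rw [if_neg hc, if_neg]
      intro hab; subst hab; exact hc (fun k _ _ => rfl)
  · rw [dif_neg h]

lemma embR_map {V : Type*} [Ring V] (f : U →+* V)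
    (S : Matrix (Fin N × Fin N) (Fin N × Fin N) U) (i : ℕ) :
    (embR N n S i).map f = embR N n (S.map f) i := by
  ext a b
  simp only [Matrix.map_apply, embR]
  split
  · split <;> simp
  · split <;> simp

lemma embR_add {i : ℕ} (h : i + 1 < n) (S T : Matrix (Fin N × Fin N) (Fin N × Fin N) U) :
    embR N n (S + T) i = embR N n S i + embR N n T i := by
  ext a b
  simp only [embR, dif_pos h, Matrix.add_apply]
  split <;> simp

lemma embR_sub {i : ℕ} (h : i + 1 < n) (S T : Matrix (Fin N × Fin N) (Fin N × Fin N) U) :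
    embR N n (S - T) i = embR N n S i - embR N n T i := by
  ext a b
  simp only [embR, dif_pos h, Matrix.sub_apply]
  split <;> simp

lemma embR_smul {α : Type*} [Monoid α] [DistribMulAction α U] {i : ℕ} (h : i + 1 < n)
    (c : α) (S : Matrix (Fin N × Fin N) (Fin N × Fin N) U) :
    embR N n (c • S) i = c • embR N n S i := by
  ext a b
  simp only [embR, dif_pos h, Matrix.smul_apply]
  split <;> simp

end Emb

section Transfer
variable {U : Type*} [Ring U] {N n m : ℕ}

lemma place_tensorEmb {ρ : Fin m → Fin n} (hρ : Function.Injective ρ)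
    {j : ℕ} (hj : j < m) (A : Matrix (Fin N) (Fin N) U) :
    place N n m ρ (tensorEmb N m j A) = tensorEmb N n (ρ ⟨j, hj⟩ : Fin n) A := by
  rw [tensorEmb_eq_place hj, place_comp hρ, tensorEmb_eq_place (ρ ⟨j, hj⟩).isLt]
  have hfun : (ρ ∘ (fun _ => ⟨j, hj⟩) : Fin 1 → Fin n) = fun _ => ⟨(ρ ⟨j, hj⟩ : ℕ), (ρ ⟨j, hj⟩).isLt⟩ := by
    funext k; simp
  rw [hfun]

lemma place_embR {ρ : Fin m → Fin n} (hρ : Function.Injective ρ)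
    {j : ℕ} (hj : j + 1 < m)
    (hcons : (ρ ⟨j + 1, hj⟩ : ℕ) = (ρ ⟨j, Nat.lt_of_succ_lt hj⟩ : ℕ) + 1)
    (S : Matrix (Fin N × Fin N) (Fin N × Fin N) U) :
    place N n m ρ (embR N m S j) = embR N n S (ρ ⟨j, Nat.lt_of_succ_lt hj⟩ : ℕ) := by
  have h2 : (ρ ⟨j, Nat.lt_of_succ_lt hj⟩ : ℕ) + 1 < n := by
    rw [← hcons]; exact (ρ ⟨j + 1, hj⟩).isLt
  rw [embR_eq_place hj, place_comp hρ, embR_eq_place h2]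
  have hfun : (ρ ∘ ![⟨j, Nat.lt_of_succ_lt hj⟩, ⟨j + 1, hj⟩] : Fin 2 → Fin n) =
      ![⟨(ρ ⟨j, Nat.lt_of_succ_lt hj⟩ : ℕ), Nat.lt_of_succ_lt h2⟩,
        ⟨(ρ ⟨j, Nat.lt_of_succ_lt hj⟩ : ℕ) + 1, h2⟩] := by
    funext k
    fin_cases k
    · ext; rfl
    · ext; exact hcons
  rw [hfun]
end Transfer

section Central
variable {U : Type*} [Ring U] {N n : ℕ}

/-- Commutation of one-leg and two-leg embedded matrices with disjoint legs,
when the entries of the two-leg matrix are central. -/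
lemma embR_comm_tensorEmb {i j : ℕ} (hij : j < i ∨ i + 1 < j)
    (S : Matrix (Fin N × Fin N) (Fin N × Fin N) U)
    (A : Matrix (Fin N) (Fin N) U)
    (hc : ∀ p q u, Commute (S p q) u) :
    embR N n S i * tensorEmb N n j A = tensorEmb N n j A * embR N n S i := by
  by_cases h : i + 1 < n
  · by_cases hj : j < n
    · rw [embR_eq_place h, tensorEmb_eq_place hj]
      apply place_comm (inj2 h) (fun x y _ => Subsingleton.elim x y)
      · intro k j'
        fin_cases k <;> · exact fun hk => by have := Fin.mk.inj hk; omega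
      · intro p q p' q'; exact hc _ _ _
    · have : tensorEmb N n j A = 1 := by
        ext a b; simp only [tensorEmb, dif_neg hj, Matrix.one_apply]
      rw [this, one_mul, mul_one]
  · rw [embR_out h, one_mul, mul_one]

lemma embR_comm_embR {i j : ℕ} (hij : i + 1 < j)
    (S T : Matrix (Fin N × Fin N) (Fin N × Fin N) U)
    (hc : ∀ p q p' q', Commute (S p q) (T p' q')) :
    embR N n S i * embR N n T j = embR N n T j * embR N n S i := by
  by_cases h : i + 1 < n
  · by_cases hj : j + 1 < n
    · rw [embR_eq_place h, embR_eq_place hj]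
      apply place_comm (inj2 h) (inj2 hj)
      · intro k j'
        fin_cases k <;> fin_cases j' <;> · exact fun hk => by have := Fin.mk.inj hk; omega
      · intro p q p' q'; exact hc _ _ _ _
    · rw [embR_out hj, one_mul, mul_one]
  · rw [embR_out h, one_mul, mul_one]

lemma tensorEmb_mul (i : ℕ) (A B : Matrix (Fin N) (Fin N) U) :
    tensorEmb N n i A * tensorEmb N n i B = tensorEmb N n i (A * B) := by
  by_cases h : i < n
  · rw [tensorEmb_eq_place h, tensorEmb_eq_place h, tensorEmb_eq_place h,
      place_mul (fun a b _ => Subsingleton.elim a b), leg1_mul]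
  · have ho : ∀ C : Matrix (Fin N) (Fin N) U, tensorEmb N n i C = 1 := by
      intro C; ext a b; simp only [tensorEmb, dif_neg h, Matrix.one_apply]
    rw [ho, ho, ho, one_mul]

lemma tensorEmb_out {j : ℕ} (hj : ¬ j < n) (A : Matrix (Fin N) (Fin N) U) :
    tensorEmb N n j A = 1 := by
  ext a b; simp only [tensorEmb, dif_neg hj, Matrix.one_apply]

end Central
section AbstractCore
variable {A : Type*} [Ring A]

lemma cancel_left' {y y' a b : A} (hy' : y' * y = 1) (h : y * a = y * b) : a = b := by
  have := congrArg (fun z => y' * z) h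
  simpa [← mul_assoc, hy'] using this

lemma braid_mixed' {x y x' y' : A} (hx : x * x' = 1) (hx' : x' * x = 1)
    (hy : y * y' = 1) (hy' : y' * y = 1)
    (hb : x * y * x = y * x * y) : y * x' * y' = x' * y' * x := by
  have step1 : y * (x * y * x') = x * y := by
    calc y * (x * y * x') = (y * x * y) * x' := by noncomm_ring
      _ = (x * y * x) * x' := by rw [hb]
      _ = x * y * (x * x') := by noncomm_ring
      _ = x * y := by rw [hx, mul_one]
  have step2 : x * y * x' = y' * (x * y) := by
    apply cancel_left' hy'
    rw [step1, ← mul_assoc, hy, one_mul]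
  calc y * x' * y' = (x' * x) * (y * x') * y' := by rw [hx']; noncomm_ring
    _ = x' * (x * y * x') * y' := by noncomm_ring
    _ = x' * (y' * (x * y)) * y' := by rw [step2]
    _ = x' * y' * x * (y * y') := by noncomm_ring
    _ = x' * y' * x := by rw [hy, mul_one]

lemma conj_mul' {Z Z' a b : A} (h : Z' * Z = 1) :
    (Z * a * Z') * (Z * b * Z') = Z * (a * b) * Z' := by
  calc (Z * a * Z') * (Z * b * Z') = Z * (a * ((Z' * Z) * b)) * Z' := by noncomm_ring
    _ = Z * (a * b) * Z' := by rw [h, one_mul]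

lemma conj_braid {x y x' y' : A} (hx : x * x' = 1)
    (hy : y * y' = 1) (hy' : y' * y = 1)
    (hbs : x' * y' * x' = y' * x' * y') :
    (x * y) * x' * (y' * x') = y' := by
  calc (x * y) * x' * (y' * x') = x * (y * (x' * y' * x')) := by noncomm_ring
    _ = x * (y * (y' * x' * y')) := by rw [hbs]
    _ = x * ((y * y') * (x' * y')) := by noncomm_ring
    _ = (x * x') * y' := by rw [hy]; noncomm_ring
    _ = y' := by rw [hx, one_mul]

lemma comm_step {x y x' y' B : A} (hx : x * x' = 1) (hx' : x' * x = 1)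
    (hy : y * y' = 1) (hy' : y' * y = 1)
    (hb : x * y * x = y * x * y)
    (hyB : y * B = B * y) :
    x * (y * (x * B * x') * y') = (y * (x * B * x') * y') * x := by
  have hmix : y * x' * y' = x' * y' * x := braid_mixed' hx hx' hy hy' hb
  calc x * (y * (x * B * x') * y') = (x * y * x) * B * (x' * y') := by noncomm_ring
    _ = (y * x * y) * B * (x' * y') := by rw [hb]
    _ = y * x * (y * B) * (x' * y') := by noncomm_ring
    _ = y * x * (B * y) * (x' * y') := by rw [hyB]
    _ = y * x * B * (y * x' * y') := by noncomm_ring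
    _ = y * x * B * (x' * y' * x) := by rw [hmix]
    _ = (y * (x * B * x') * y') * x := by noncomm_ring

lemma jm_re_step {x y J : A}
    (hb : y * x * y = x * y * x)
    (hxJ : x * J = J * x)
    (hIH : y * J * y * J = J * y * J * y) :
    x * (y * J * y) * x * (y * J * y) = (y * J * y) * x * (y * J * y) * x := by
  have h1 : x * (y * J * y) * x * (y * J * y) = x * y * J * (y * x * y) * J * y := by
    noncomm_ring
  have h2 : (y * J * y) * x * (y * J * y) * x = y * J * (y * x * y) * J * y * x := by
    noncomm_ring
  rw [h1, h2, hb]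
  calc x * y * J * (x * y * x) * J * y
      = x * y * (J * x) * y * (x * J) * y := by noncomm_ring
    _ = x * y * (x * J) * y * (J * x) * y := by rw [hxJ]
    _ = (x * y * x) * (J * y * J) * (x * y) := by noncomm_ring
    _ = (y * x * y) * (J * y * J) * (x * y) := by rw [← hb]
    _ = y * x * (y * J * y * J) * (x * y) := by noncomm_ring
    _ = y * x * (J * y * J * y) * (x * y) := by rw [hIH]
    _ = y * x * (J * y * J) * (y * x * y) := by noncomm_ring
    _ = y * x * (J * y * J) * (x * y * x) := by rw [hb]
    _ = y * (x * J) * y * (J * x) * y * x := by noncomm_ring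
    _ = y * (J * x) * y * (x * J) * y * x := by rw [hxJ]
    _ = y * J * (x * y * x) * J * y * x := by noncomm_ring

lemma jm_comm_of_re {s J : A} (h : s * J * s * J = J * s * J * s) :
    J * (s * J * s) = (s * J * s) * J := by
  calc J * (s * J * s) = J * s * J * s := by noncomm_ring
    _ = s * J * s * J := h.symm
    _ = (s * J * s) * J := by noncomm_ring

lemma key_step {u v r s Dm Dp L jm Mm Mm1 Dm1 : A}
    (hu : ∀ z : A, u * z = z * u) (hv : ∀ z : A, v * z = z * v)
    (huv : u * v = 1)
    (hrs : r * s = 1) (hsr : s * r = 1)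
    (hDpr : Dp * r = r * Dp) (hDps : Dp * s = s * Dp)
    (hMm1 : Mm1 = r * Mm * s) (hDm1 : Dm1 = r * Dm * s)
    (hkey : Dp * (L + v * (jm - 1)) = Mm * Dm * Dp * jm)
    (hcross : Dm * Mm1 = s + Mm1 * Dm * (s * s))
    (hre : s * Dm * s * Dm = Dm * s * Dm * s)
    (hsub : s = r - u) :
    (Dm * Dp) * ((r * L * s) + v * (s * jm * s - 1)) =
      Mm1 * Dm1 * (Dm * Dp) * (s * jm * s) := by
  have hvu : v * u = 1 := by rw [← hu v]; exact huv
  have hrM : Mm1 * r = r * Mm := by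
    rw [hMm1]
    calc r * Mm * s * r = r * Mm * (s * r) := by noncomm_ring
      _ = r * Mm := by rw [hsr, mul_one]
  have h0 : Dp * (L + v * (jm - 1)) = Dp * L + v * (Dp * jm) - v * Dp := by
    calc Dp * (L + v * (jm - 1)) = Dp * L + (Dp * v) * jm - Dp * v := by noncomm_ring
      _ = Dp * L + (v * Dp) * jm - v * Dp := by rw [← hv Dp]
      _ = Dp * L + v * (Dp * jm) - v * Dp := by rw [mul_assoc]
  have hDpL : Dp * L = Mm * Dm * Dp * jm - v * (Dp * jm) + v * Dp := by
    rw [← hkey, h0]; abel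
  -- main first piece
  have e1 : Dm * Dp * (r * L * s) =
      Dm * Dp * jm * s + Mm1 * Dm * s * Dm * Dp * jm * s
        - v * (Dm * r * Dp * jm * s) + v * (Dm * Dp) := by
    calc Dm * Dp * (r * L * s) = Dm * (Dp * r) * (L * s) := by noncomm_ring
      _ = Dm * (r * Dp) * (L * s) := by rw [hDpr]
      _ = Dm * r * (Dp * L) * s := by noncomm_ring
      _ = Dm * r * (Mm * Dm * Dp * jm - v * (Dp * jm) + v * Dp) * s := by rw [hDpL]
      _ = (Dm * (r * Mm)) * (Dm * Dp * jm * s) - (Dm * r) * v * (Dp * jm * s)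
            + (Dm * r) * v * (Dp * s) := by noncomm_ring
      _ = (Dm * (Mm1 * r)) * (Dm * Dp * jm * s) - v * (Dm * r) * (Dp * jm * s)
            + v * (Dm * r) * (Dp * s) := by rw [hrM, ← hv (Dm * r)]
      _ = (Dm * Mm1) * (r * Dm * Dp * jm * s) - v * (Dm * r * Dp * jm * s)
            + v * (Dm * (r * (Dp * s))) := by noncomm_ring
      _ = (s + Mm1 * Dm * (s * s)) * (r * Dm * Dp * jm * s) - v * (Dm * r * Dp * jm * s)
            + v * (Dm * (r * (s * Dp))) := by rw [hcross, hDps]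
      _ = (s * r) * (Dm * Dp * jm * s) + Mm1 * Dm * s * (s * r) * (Dm * Dp * jm * s)
            - v * (Dm * r * Dp * jm * s) + v * (Dm * ((r * s) * Dp)) := by noncomm_ring
      _ = 1 * (Dm * Dp * jm * s) + Mm1 * Dm * s * 1 * (Dm * Dp * jm * s)
            - v * (Dm * r * Dp * jm * s) + v * (Dm * (1 * Dp)) := by rw [hsr, hrs]
      _ = Dm * Dp * jm * s + Mm1 * Dm * s * Dm * Dp * jm * s
            - v * (Dm * r * Dp * jm * s) + v * (Dm * Dp) := by noncomm_ring
  -- second piece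
  have e2 : Dm * Dp * (v * (s * jm * s)) =
      v * (Dm * r * Dp * jm * s) - Dm * Dp * jm * s := by
    calc Dm * Dp * (v * (s * jm * s)) = (Dm * Dp) * v * (s * (jm * s)) := by noncomm_ring
      _ = v * (Dm * Dp) * (s * (jm * s)) := by rw [← hv (Dm * Dp)]
      _ = v * (Dm * (Dp * s) * (jm * s)) := by noncomm_ring
      _ = v * (Dm * (s * Dp) * (jm * s)) := by rw [hDps]
      _ = v * (Dm * ((r - u) * Dp) * (jm * s)) := by rw [← hsub]
      _ = v * (Dm * r * Dp * jm * s) - v * (Dm * u) * (Dp * (jm * s)) := by noncomm_ring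
      _ = v * (Dm * r * Dp * jm * s) - v * (u * Dm) * (Dp * (jm * s)) := by rw [← hu Dm]
      _ = v * (Dm * r * Dp * jm * s) - (v * u) * (Dm * (Dp * (jm * s))) := by noncomm_ring
      _ = v * (Dm * r * Dp * jm * s) - 1 * (Dm * (Dp * (jm * s))) := by rw [hvu]
      _ = v * (Dm * r * Dp * jm * s) - Dm * Dp * jm * s := by noncomm_ring
  -- right-hand side
  have e3 : Mm1 * Dm1 * (Dm * Dp) * (s * jm * s) =
      Mm1 * Dm * s * Dm * Dp * jm * s := by
    calc Mm1 * Dm1 * (Dm * Dp) * (s * jm * s)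
        = Mm1 * (r * Dm * s) * (Dm * Dp) * (s * jm * s) := by rw [hDm1]
      _ = Mm1 * r * (Dm * s * Dm) * (Dp * s) * (jm * s) := by noncomm_ring
      _ = Mm1 * r * (Dm * s * Dm) * (s * Dp) * (jm * s) := by rw [hDps]
      _ = Mm1 * r * (Dm * s * Dm * s) * (Dp * (jm * s)) := by noncomm_ring
      _ = Mm1 * r * (s * Dm * s * Dm) * (Dp * (jm * s)) := by rw [← hre]
      _ = Mm1 * (r * s) * (Dm * s * Dm * (Dp * (jm * s))) := by noncomm_ring
      _ = Mm1 * 1 * (Dm * s * Dm * (Dp * (jm * s))) := by rw [hrs]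
      _ = Mm1 * Dm * s * Dm * Dp * jm * s := by noncomm_ring
  calc (Dm * Dp) * ((r * L * s) + v * (s * jm * s - 1))
      = Dm * Dp * (r * L * s) + Dm * Dp * (v * (s * jm * s)) - Dm * Dp * (v * 1) := by
        noncomm_ring
    _ = (Dm * Dp * jm * s + Mm1 * Dm * s * Dm * Dp * jm * s
          - v * (Dm * r * Dp * jm * s) + v * (Dm * Dp))
        + (v * (Dm * r * Dp * jm * s) - Dm * Dp * jm * s) - Dm * Dp * (v * 1) := by
        rw [e1, e2]
    _ = Mm1 * Dm * s * Dm * Dp * jm * s + (v * (Dm * Dp) - (Dm * Dp) * v) := by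
        noncomm_ring
    _ = Mm1 * Dm * s * Dm * Dp * jm * s + (v * (Dm * Dp) - v * (Dm * Dp)) := by
        rw [← hv (Dm * Dp)]
    _ = Mm1 * Dm * s * Dm * Dp * jm * s := by noncomm_ring
    _ = Mm1 * Dm1 * (Dm * Dp) * (s * jm * s) := e3.symm

end AbstractCore
section MainCalc

variable {N n : ℕ} {W : Type*} [Ring W]

/-- the inverse Jucys–Murphy string built from `Sw`. -/
def jnW (N n : ℕ) {W : Type*} [Ring W] (Sw : Matrix (Fin N × Fin N) (Fin N × Fin N) W) :
    ℕ → Matrix (Fin n → Fin N) (Fin n → Fin N) W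
  | 0 => 1
  | k + 1 => embR N n Sw k * jnW N n Sw k * embR N n Sw k

/-- `D̄_{m-1} ⋯ D̄_1 D̄_0`. -/
def DpProd (N n : ℕ) {W : Type*} [Ring W]
    (Rw Sw : Matrix (Fin N × Fin N) (Fin N × Fin N) W)
    (D : Matrix (Fin N) (Fin N) W) (m : ℕ) :
    Matrix (Fin n → Fin N) (Fin n → Fin N) W :=
  ((List.range m).reverse.map (fun k => Abar N n Rw Sw D k)).prod

lemma DpProd_zero {Rw Sw : Matrix (Fin N × Fin N) (Fin N × Fin N) W}
    {D : Matrix (Fin N) (Fin N) W} : DpProd N n Rw Sw D 0 = 1 := rfl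

lemma DpProd_succ {Rw Sw : Matrix (Fin N × Fin N) (Fin N × Fin N) W}
    {D : Matrix (Fin N) (Fin N) W} (m : ℕ) :
    DpProd N n Rw Sw D (m + 1) = Abar N n Rw Sw D m * DpProd N n Rw Sw D m := by
  unfold DpProd
  rw [List.range_succ, List.reverse_append]
  simp

/-- All assumptions on the pair `(Rw, Sw)` needed for the calculus. -/
structure GoodPair (N n : ℕ) {W : Type*} [Ring W]
    (Rw Sw : Matrix (Fin N × Fin N) (Fin N × Fin N) W) : Prop where
  RS : Rw * Sw = 1
  SR : Sw * Rw = 1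
  br : ∀ i, i + 2 < n → embR N n Rw i * embR N n Rw (i + 1) * embR N n Rw i =
    embR N n Rw (i + 1) * embR N n Rw i * embR N n Rw (i + 1)
  cR : ∀ p q u, Commute (Rw p q) u
  cS : ∀ p q u, Commute (Sw p q) u

namespace GoodPair

variable {Rw Sw : Matrix (Fin N × Fin N) (Fin N × Fin N) W}

lemma rs (h : GoodPair N n Rw Sw) (i : ℕ) : embR N n Rw i * embR N n Sw i = 1 := by
  rw [embR_mul, h.RS, embR_one]

lemma sr (h : GoodPair N n Rw Sw) (i : ℕ) : embR N n Sw i * embR N n Rw i = 1 := by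
  rw [embR_mul, h.SR, embR_one]

lemma brs (h : GoodPair N n Rw Sw) (i : ℕ) (hi : i + 2 < n) :
    embR N n Sw i * embR N n Sw (i + 1) * embR N n Sw i =
      embR N n Sw (i + 1) * embR N n Sw i * embR N n Sw (i + 1) := by
  exact braid_inv (h.rs i) (h.sr i) (h.rs (i+1)) (h.sr (i+1)) (h.br i hi)

/-- gap commutation for any two of `Rw`,`Sw` (both have central entries). -/
lemma gap (h : GoodPair N n Rw Sw) {X Y : Matrix (Fin N × Fin N) (Fin N × Fin N) W}
    (hcX : ∀ p q u, Commute (X p q) u) {i j : ℕ} (hij : i + 2 ≤ j ∨ j + 2 ≤ i) :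
    embR N n X i * embR N n Y j = embR N n Y j * embR N n X i := by
  rcases hij with hij | hij
  · exact embR_comm_embR (by omega) X Y (fun p q p' q' => hcX p q _)
  · exact (embR_comm_embR (i := j) (j := i) (by omega) Y X
      (fun p q p' q' => (hcX p' q' (Y p q)).symm)).symm

lemma commA1 (h : GoodPair N n Rw Sw) {X : Matrix (Fin N × Fin N) (Fin N × Fin N) W}
    (hcX : ∀ p q u, Commute (X p q) u) (A : Matrix (Fin N) (Fin N) W) :
    ∀ k i, k + 1 ≤ i →
      embR N n X i * Abar N n Rw Sw A k = Abar N n Rw Sw A k * embR N n X i := by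
  intro k
  induction k with
  | zero =>
    intro i hi
    exact embR_comm_tensorEmb (by omega) X A hcX
  | succ k ih =>
    intro i hi
    show embR N n X i * (embR N n Rw k * Abar N n Rw Sw A k * embR N n Sw k) = _
    have h1 : embR N n X i * embR N n Rw k = embR N n Rw k * embR N n X i :=
      h.gap hcX (Or.inr (by omega))
    have h2 : embR N n X i * embR N n Sw k = embR N n Sw k * embR N n X i :=
      h.gap hcX (Or.inr (by omega))
    have h3 := ih i (by omega)
    calc embR N n X i * (embR N n Rw k * Abar N n Rw Sw A k * embR N n Sw k)
        = (embR N n X i * embR N n Rw k) * Abar N n Rw Sw A k * embR N n Sw k := by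
          noncomm_ring
      _ = embR N n Rw k * (embR N n X i * Abar N n Rw Sw A k) * embR N n Sw k := by
          rw [h1]; noncomm_ring
      _ = embR N n Rw k * Abar N n Rw Sw A k * (embR N n X i * embR N n Sw k) := by
          rw [h3]; noncomm_ring
      _ = embR N n Rw k * Abar N n Rw Sw A k * embR N n Sw k * embR N n X i := by
          rw [h2]; noncomm_ring

lemma commA2R (h : GoodPair N n Rw Sw) (A : Matrix (Fin N) (Fin N) W) :
    ∀ k i, k < n → i + 2 ≤ k →
      embR N n Rw i * Abar N n Rw Sw A k = Abar N n Rw Sw A k * embR N n Rw i := by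
  intro k
  induction k with
  | zero => intro i _ hik; omega
  | succ k ih =>
    intro i hk hik
    rcases Nat.lt_or_ge (i + 2) (k + 1) with hlt | hge
    · -- i + 2 ≤ k
      show embR N n Rw i * (embR N n Rw k * Abar N n Rw Sw A k * embR N n Sw k) = _
      have h1 : embR N n Rw i * embR N n Rw k = embR N n Rw k * embR N n Rw i :=
        h.gap h.cR (Or.inl (by omega))
      have h2 : embR N n Rw i * embR N n Sw k = embR N n Sw k * embR N n Rw i :=
        h.gap h.cR (Or.inl (by omega))
      have h3 := ih i (by omega) (by omega)
      calc embR N n Rw i * (embR N n Rw k * Abar N n Rw Sw A k * embR N n Sw k)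
          = (embR N n Rw i * embR N n Rw k) * Abar N n Rw Sw A k * embR N n Sw k := by
            noncomm_ring
        _ = embR N n Rw k * (embR N n Rw i * Abar N n Rw Sw A k) * embR N n Sw k := by
            rw [h1]; noncomm_ring
        _ = embR N n Rw k * Abar N n Rw Sw A k * (embR N n Rw i * embR N n Sw k) := by
            rw [h3]; noncomm_ring
        _ = embR N n Rw k * Abar N n Rw Sw A k * embR N n Sw k * embR N n Rw i := by
            rw [h2]; noncomm_ring
    · -- i + 2 = k + 1, i.e. k = i + 1
      have hk' : k = i + 1 := by omega
      subst hk'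
      show embR N n Rw i * (embR N n Rw (i+1) * Abar N n Rw Sw A (i+1) * embR N n Sw (i+1)) = _
      have hstep := comm_step (B := Abar N n Rw Sw A i)
        (h.rs i) (h.sr i) (h.rs (i+1)) (h.sr (i+1)) (h.br i (by omega))
        (h.commA1 h.cR A i (i+1) (by omega))
      calc embR N n Rw i * (embR N n Rw (i+1) * Abar N n Rw Sw A (i+1) * embR N n Sw (i+1))
          = embR N n Rw i * (embR N n Rw (i+1) *
              (embR N n Rw i * Abar N n Rw Sw A i * embR N n Sw i) * embR N n Sw (i+1)) := rfl
        _ = (embR N n Rw (i+1) *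
              (embR N n Rw i * Abar N n Rw Sw A i * embR N n Sw i) * embR N n Sw (i+1)) *
            embR N n Rw i := hstep
        _ = embR N n Rw (i+1) * Abar N n Rw Sw A (i+1) * embR N n Sw (i+1) *
            embR N n Rw i := rfl

lemma commA2S (h : GoodPair N n Rw Sw) (A : Matrix (Fin N) (Fin N) W) (k i : ℕ) (hk : k < n) (hik : i + 2 ≤ k) :
    embR N n Sw i * Abar N n Rw Sw A k = Abar N n Rw Sw A k * embR N n Sw i :=
  comm_of_comm_inv (h.rs i) (h.sr i) (h.commA2R A k i hk hik)

/-- combined commutation of `r_i` with `Ā_k`. -/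
lemma commR_Abar (h : GoodPair N n Rw Sw) (A : Matrix (Fin N) (Fin N) W) (k i : ℕ) (hk : k < n)
    (hik : i + 2 ≤ k ∨ k + 1 ≤ i) :
    embR N n Rw i * Abar N n Rw Sw A k = Abar N n Rw Sw A k * embR N n Rw i := by
  rcases hik with hik | hik
  · exact h.commA2R A k i hk hik
  · exact h.commA1 h.cR A k i hik

lemma commS_Abar (h : GoodPair N n Rw Sw) (A : Matrix (Fin N) (Fin N) W) (k i : ℕ) (hk : k < n)
    (hik : i + 2 ≤ k ∨ k + 1 ≤ i) :
    embR N n Sw i * Abar N n Rw Sw A k = Abar N n Rw Sw A k * embR N n Sw i := by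
  rcases hik with hik | hik
  · exact h.commA2S A k i hk hik
  · exact h.commA1 h.cS A k i hik

lemma Abar_mul (h : GoodPair N n Rw Sw) (A B : Matrix (Fin N) (Fin N) W) (k : ℕ) :
    Abar N n Rw Sw (A * B) k = Abar N n Rw Sw A k * Abar N n Rw Sw B k := by
  induction k with
  | zero => exact (tensorEmb_mul 0 A B).symm
  | succ k ih =>
    show embR N n Rw k * Abar N n Rw Sw (A * B) k * embR N n Sw k = _
    rw [ih]
    calc embR N n Rw k * (Abar N n Rw Sw A k * Abar N n Rw Sw B k) * embR N n Sw k
        = embR N n Rw k * Abar N n Rw Sw A k * (embR N n Sw k * embR N n Rw k) *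
            Abar N n Rw Sw B k * embR N n Sw k := by rw [h.sr]; noncomm_ring
      _ = (embR N n Rw k * Abar N n Rw Sw A k * embR N n Sw k) *
            (embR N n Rw k * Abar N n Rw Sw B k * embR N n Sw k) := by noncomm_ring

/-- conjugation by `Z = r_m r_{m+1}` sends level-`m` objects to level-`m+1`. -/
lemma conjZ_D (h : GoodPair N n Rw Sw) (D : Matrix (Fin N) (Fin N) W) (m : ℕ) (hm : m + 2 < n) :
    (embR N n Rw m * embR N n Rw (m+1)) * Abar N n Rw Sw D m *
      (embR N n Sw (m+1) * embR N n Sw m) = Abar N n Rw Sw D (m+1) := by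
  have h1 : embR N n Rw (m+1) * Abar N n Rw Sw D m =
      Abar N n Rw Sw D m * embR N n Rw (m+1) := h.commA1 h.cR D m (m+1) (by omega)
  calc (embR N n Rw m * embR N n Rw (m+1)) * Abar N n Rw Sw D m *
        (embR N n Sw (m+1) * embR N n Sw m)
      = embR N n Rw m * (embR N n Rw (m+1) * Abar N n Rw Sw D m) *
        embR N n Sw (m+1) * embR N n Sw m := by noncomm_ring
    _ = embR N n Rw m * Abar N n Rw Sw D m *
        (embR N n Rw (m+1) * embR N n Sw (m+1)) * embR N n Sw m := by
        rw [h1]; noncomm_ring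
    _ = embR N n Rw m * Abar N n Rw Sw D m * embR N n Sw m := by
        rw [h.rs]; noncomm_ring
    _ = Abar N n Rw Sw D (m+1) := rfl

lemma conjZ_M (h : GoodPair N n Rw Sw) (M : Matrix (Fin N) (Fin N) W) (m : ℕ) (hm : m + 2 < n) :
    (embR N n Rw m * embR N n Rw (m+1)) * Abar N n Rw Sw M (m+1) *
      (embR N n Sw (m+1) * embR N n Sw m) = Abar N n Rw Sw M (m+2) := by
  have h1 : embR N n Rw m * Abar N n Rw Sw M (m+2) =
      Abar N n Rw Sw M (m+2) * embR N n Rw m :=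
    h.commA2R M (m+2) m (by omega) (by omega)
  have h2 : Abar N n Rw Sw M (m+2) =
      embR N n Rw (m+1) * Abar N n Rw Sw M (m+1) * embR N n Sw (m+1) := rfl
  calc (embR N n Rw m * embR N n Rw (m+1)) * Abar N n Rw Sw M (m+1) *
        (embR N n Sw (m+1) * embR N n Sw m)
      = embR N n Rw m * (embR N n Rw (m+1) * Abar N n Rw Sw M (m+1) * embR N n Sw (m+1)) *
        embR N n Sw m := by noncomm_ring
    _ = embR N n Rw m * Abar N n Rw Sw M (m+2) * embR N n Sw m := by rw [← h2]
    _ = Abar N n Rw Sw M (m+2) * (embR N n Rw m * embR N n Sw m) := by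
        rw [h1]; noncomm_ring
    _ = Abar N n Rw Sw M (m+2) := by rw [h.rs, mul_one]

lemma conjZ_s (h : GoodPair N n Rw Sw) (m : ℕ) (hm : m + 2 < n) :
    (embR N n Rw m * embR N n Rw (m+1)) * embR N n Sw m *
      (embR N n Sw (m+1) * embR N n Sw m) = embR N n Sw (m+1) := by
  exact conj_braid (h.rs m) (h.rs (m+1)) (h.sr (m+1)) (h.brs m hm)

lemma crossLevel (h : GoodPair N n Rw Sw) (M D : Matrix (Fin N) (Fin N) W)
    (hc0 : tensorEmb N n 0 D * Abar N n Rw Sw M 1 =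
      embR N n Sw 0 + Abar N n Rw Sw M 1 * tensorEmb N n 0 D *
        (embR N n Sw 0 * embR N n Sw 0)) :
    ∀ m, m + 1 < n →
      Abar N n Rw Sw D m * Abar N n Rw Sw M (m+1) =
        embR N n Sw m + Abar N n Rw Sw M (m+1) * Abar N n Rw Sw D m *
          (embR N n Sw m * embR N n Sw m) := by
  intro m
  induction m with
  | zero => intro _; exact hc0
  | succ m ih =>
    intro hm
    have IH := ih (by omega)
    set Z := embR N n Rw m * embR N n Rw (m+1) with hZ
    set Z' := embR N n Sw (m+1) * embR N n Sw m with hZ'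
    have hZZ' : Z * Z' = 1 := by
      rw [hZ, hZ']
      calc embR N n Rw m * embR N n Rw (m+1) * (embR N n Sw (m+1) * embR N n Sw m)
          = embR N n Rw m * (embR N n Rw (m+1) * embR N n Sw (m+1)) * embR N n Sw m := by
            noncomm_ring
        _ = embR N n Rw m * embR N n Sw m := by rw [h.rs]; noncomm_ring
        _ = 1 := h.rs m
    have hZ'Z : Z' * Z = 1 := by
      rw [hZ, hZ']
      calc embR N n Sw (m+1) * embR N n Sw m * (embR N n Rw m * embR N n Rw (m+1))
          = embR N n Sw (m+1) * (embR N n Sw m * embR N n Rw m) * embR N n Rw (m+1) := by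
            noncomm_ring
        _ = embR N n Sw (m+1) * embR N n Rw (m+1) := by rw [h.sr]; noncomm_ring
        _ = 1 := h.sr (m+1)
    have hconj := congrArg (fun X => Z * X * Z') IH
    -- LHS of hconj
    have lhs_eq : Z * (Abar N n Rw Sw D m * Abar N n Rw Sw M (m+1)) * Z' =
        Abar N n Rw Sw D (m+1) * Abar N n Rw Sw M (m+2) := by
      rw [← conj_mul' hZ'Z, h.conjZ_D D m hm, h.conjZ_M M m hm]
    have rhs_eq : Z * (embR N n Sw m + Abar N n Rw Sw M (m+1) * Abar N n Rw Sw D m *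
          (embR N n Sw m * embR N n Sw m)) * Z' =
        embR N n Sw (m+1) + Abar N n Rw Sw M (m+2) * Abar N n Rw Sw D (m+1) *
          (embR N n Sw (m+1) * embR N n Sw (m+1)) := by
      have e1 : Z * (embR N n Sw m + Abar N n Rw Sw M (m+1) * Abar N n Rw Sw D m *
            (embR N n Sw m * embR N n Sw m)) * Z' =
          Z * embR N n Sw m * Z' +
          Z * (Abar N n Rw Sw M (m+1) * Abar N n Rw Sw D m *
            (embR N n Sw m * embR N n Sw m)) * Z' := by noncomm_ring
      rw [e1]
      have e2 : Z * (Abar N n Rw Sw M (m+1) * Abar N n Rw Sw D m *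
            (embR N n Sw m * embR N n Sw m)) * Z' =
          (Z * Abar N n Rw Sw M (m+1) * Z') * (Z * Abar N n Rw Sw D m * Z') *
            ((Z * embR N n Sw m * Z') * (Z * embR N n Sw m * Z')) := by
        rw [conj_mul' hZ'Z, conj_mul' hZ'Z, conj_mul' hZ'Z]
      rw [e2, h.conjZ_D D m hm, h.conjZ_M M m hm, h.conjZ_s m hm]
    rw [lhs_eq, rhs_eq] at hconj
    exact hconj

lemma sReLevel (h : GoodPair N n Rw Sw) (D : Matrix (Fin N) (Fin N) W)
    (hd0 : embR N n Sw 0 * tensorEmb N n 0 D * embR N n Sw 0 * tensorEmb N n 0 D =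
      tensorEmb N n 0 D * embR N n Sw 0 * tensorEmb N n 0 D * embR N n Sw 0) :
    ∀ m, m + 1 < n →
      embR N n Sw m * Abar N n Rw Sw D m * embR N n Sw m * Abar N n Rw Sw D m =
        Abar N n Rw Sw D m * embR N n Sw m * Abar N n Rw Sw D m * embR N n Sw m := by
  intro m
  induction m with
  | zero => intro _; exact hd0
  | succ m ih =>
    intro hm
    have IH := ih (by omega)
    set Z := embR N n Rw m * embR N n Rw (m+1) with hZ
    set Z' := embR N n Sw (m+1) * embR N n Sw m with hZ'
    have hZ'Z : Z' * Z = 1 := by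
      rw [hZ, hZ']
      calc embR N n Sw (m+1) * embR N n Sw m * (embR N n Rw m * embR N n Rw (m+1))
          = embR N n Sw (m+1) * (embR N n Sw m * embR N n Rw m) * embR N n Rw (m+1) := by
            noncomm_ring
        _ = embR N n Sw (m+1) * embR N n Rw (m+1) := by rw [h.sr]; noncomm_ring
        _ = 1 := h.sr (m+1)
    have hconj := congrArg (fun X => Z * X * Z') IH
    have e1 : Z * (embR N n Sw m * Abar N n Rw Sw D m * embR N n Sw m * Abar N n Rw Sw D m) * Z' =
        (Z * embR N n Sw m * Z') * (Z * Abar N n Rw Sw D m * Z') *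
          (Z * embR N n Sw m * Z') * (Z * Abar N n Rw Sw D m * Z') := by
      rw [conj_mul' hZ'Z, conj_mul' hZ'Z, conj_mul' hZ'Z]
    have e2 : Z * (Abar N n Rw Sw D m * embR N n Sw m * Abar N n Rw Sw D m * embR N n Sw m) * Z' =
        (Z * Abar N n Rw Sw D m * Z') * (Z * embR N n Sw m * Z') *
          (Z * Abar N n Rw Sw D m * Z') * (Z * embR N n Sw m * Z') := by
      rw [conj_mul' hZ'Z, conj_mul' hZ'Z, conj_mul' hZ'Z]
    rw [e1, e2, h.conjZ_D D m hm, h.conjZ_s m hm] at hconj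
    exact hconj

end GoodPair
end MainCalc
section MainCalc2
variable {N n : ℕ} {W : Type*} [Ring W]
variable {Rw Sw : Matrix (Fin N × Fin N) (Fin N × Fin N) W}

namespace GoodPair

lemma jn_comm_emb (h : GoodPair N n Rw Sw)
    {X : Matrix (Fin N × Fin N) (Fin N × Fin N) W}
    (hcX : ∀ p q u, Commute (X p q) u) :
    ∀ k i, k + 1 ≤ i → jnW N n Sw k * embR N n X i = embR N n X i * jnW N n Sw k := by
  intro k
  induction k with
  | zero => intro i _; show (1 : Matrix _ _ W) * _ = _ * 1; rw [one_mul, mul_one]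
  | succ k ih =>
    intro i hi
    show (embR N n Sw k * jnW N n Sw k * embR N n Sw k) * embR N n X i = _
    have h1 : embR N n X i * embR N n Sw k = embR N n Sw k * embR N n X i :=
      h.gap hcX (Or.inr (by omega))
    have h2 := ih i (by omega)
    calc (embR N n Sw k * jnW N n Sw k * embR N n Sw k) * embR N n X i
        = embR N n Sw k * jnW N n Sw k * (embR N n Sw k * embR N n X i) := by noncomm_ring
      _ = embR N n Sw k * (jnW N n Sw k * embR N n X i) * embR N n Sw k := by
          rw [← h1]; noncomm_ring
      _ = embR N n Sw k * (embR N n X i * jnW N n Sw k) * embR N n Sw k := by rw [h2]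
      _ = (embR N n Sw k * embR N n X i) * jnW N n Sw k * embR N n Sw k := by noncomm_ring
      _ = embR N n X i * (embR N n Sw k * jnW N n Sw k * embR N n Sw k) := by
          rw [← h1]; noncomm_ring

lemma jn_comm_Abar (h : GoodPair N n Rw Sw) (A : Matrix (Fin N) (Fin N) W) :
    ∀ k m, k < m → m < n →
      jnW N n Sw k * Abar N n Rw Sw A m = Abar N n Rw Sw A m * jnW N n Sw k := by
  intro k
  induction k with
  | zero => intro m _ _; show (1 : Matrix _ _ W) * _ = _ * 1; rw [one_mul, mul_one]
  | succ k ih =>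
    intro m hk hm
    show (embR N n Sw k * jnW N n Sw k * embR N n Sw k) * Abar N n Rw Sw A m = _
    have h1 : embR N n Sw k * Abar N n Rw Sw A m = Abar N n Rw Sw A m * embR N n Sw k :=
      h.commA2S A m k hm (by omega)
    have h2 := ih m (by omega) hm
    calc (embR N n Sw k * jnW N n Sw k * embR N n Sw k) * Abar N n Rw Sw A m
        = embR N n Sw k * jnW N n Sw k * (embR N n Sw k * Abar N n Rw Sw A m) := by
          noncomm_ring
      _ = embR N n Sw k * (jnW N n Sw k * Abar N n Rw Sw A m) * embR N n Sw k := by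
          rw [h1]; noncomm_ring
      _ = embR N n Sw k * (Abar N n Rw Sw A m * jnW N n Sw k) * embR N n Sw k := by rw [h2]
      _ = (embR N n Sw k * Abar N n Rw Sw A m) * (jnW N n Sw k * embR N n Sw k) := by
          noncomm_ring
      _ = Abar N n Rw Sw A m * (embR N n Sw k * (jnW N n Sw k * embR N n Sw k)) := by
          rw [h1]; noncomm_ring
      _ = Abar N n Rw Sw A m * (embR N n Sw k * jnW N n Sw k * embR N n Sw k) := by
          noncomm_ring

lemma jn_re (h : GoodPair N n Rw Sw) :
    ∀ p, p + 1 < n →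
      embR N n Sw p * jnW N n Sw p * embR N n Sw p * jnW N n Sw p =
        jnW N n Sw p * embR N n Sw p * jnW N n Sw p * embR N n Sw p := by
  intro p
  induction p with
  | zero =>
    intro _
    show embR N n Sw 0 * 1 * embR N n Sw 0 * 1 = 1 * embR N n Sw 0 * 1 * embR N n Sw 0
    noncomm_ring
  | succ p ih =>
    intro hp
    have hb : embR N n Sw p * embR N n Sw (p+1) * embR N n Sw p =
        embR N n Sw (p+1) * embR N n Sw p * embR N n Sw (p+1) := h.brs p hp
    have hxJ : embR N n Sw (p+1) * jnW N n Sw p = jnW N n Sw p * embR N n Sw (p+1) :=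
      (h.jn_comm_emb h.cS p (p+1) (by omega)).symm ▸ rfl
    have hxJ' : embR N n Sw (p+1) * jnW N n Sw p = jnW N n Sw p * embR N n Sw (p+1) :=
      (h.jn_comm_emb h.cS p (p+1) (by omega)).symm
    exact jm_re_step hb hxJ' (ih (by omega))

lemma jn_comm_jn (h : GoodPair N n Rw Sw) :
    ∀ m k, k < m → m < n →
      jnW N n Sw k * jnW N n Sw m = jnW N n Sw m * jnW N n Sw k := by
  intro m
  induction m with
  | zero => intro k hk _; omega
  | succ m ih =>
    intro k hk hm
    rcases Nat.lt_or_ge k m with hkm | hkm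
    · show jnW N n Sw k * (embR N n Sw m * jnW N n Sw m * embR N n Sw m) = _
      have h1 : jnW N n Sw k * embR N n Sw m = embR N n Sw m * jnW N n Sw k :=
        h.jn_comm_emb h.cS k m (by omega)
      have h2 := ih k (by omega) (by omega)
      calc jnW N n Sw k * (embR N n Sw m * jnW N n Sw m * embR N n Sw m)
          = (jnW N n Sw k * embR N n Sw m) * jnW N n Sw m * embR N n Sw m := by
            noncomm_ring
        _ = embR N n Sw m * (jnW N n Sw k * jnW N n Sw m) * embR N n Sw m := by
            rw [h1]; noncomm_ring
        _ = embR N n Sw m * jnW N n Sw m * (jnW N n Sw k * embR N n Sw m) := by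
            rw [h2]; noncomm_ring
        _ = embR N n Sw m * jnW N n Sw m * embR N n Sw m * jnW N n Sw k := by
            rw [h1]; noncomm_ring
    · have hkm' : k = m := by omega
      subst hkm'
      show jnW N n Sw k * (embR N n Sw k * jnW N n Sw k * embR N n Sw k) = _
      exact jm_comm_of_re (h.jn_re k (by omega))

/-- a central matrix commutes with `DpProd`. -/
lemma comm_DpProd (h : GoodPair N n Rw Sw) (D : Matrix (Fin N) (Fin N) W)
    {x : Matrix (Fin n → Fin N) (Fin n → Fin N) W} (m : ℕ)
    (hx : ∀ k, k < m → x * Abar N n Rw Sw D k = Abar N n Rw Sw D k * x) :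
    x * DpProd N n Rw Sw D m = DpProd N n Rw Sw D m * x := by
  unfold DpProd
  refine Commute.list_prod_right _ _ ?_
  intro y hy
  simp only [List.mem_map, List.mem_reverse, List.mem_range] at hy
  obtain ⟨k, hk, rfl⟩ := hy
  exact hx k hk

/-- KEY lemma: the Capelli induction step identity at level `m`. -/
lemma keyLemma (h : GoodPair N n Rw Sw) (M D : Matrix (Fin N) (Fin N) W)
    (u v : Matrix (Fin n → Fin N) (Fin n → Fin N) W)
    (hu : ∀ z, u * z = z * u) (hv : ∀ z, v * z = z * v) (huv : u * v = 1)
    (hsub : ∀ i, i + 1 < n → embR N n Sw i = embR N n Rw i - u)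
    (hc0 : tensorEmb N n 0 D * Abar N n Rw Sw M 1 =
      embR N n Sw 0 + Abar N n Rw Sw M 1 * tensorEmb N n 0 D *
        (embR N n Sw 0 * embR N n Sw 0))
    (hd0 : embR N n Sw 0 * tensorEmb N n 0 D * embR N n Sw 0 * tensorEmb N n 0 D =
      tensorEmb N n 0 D * embR N n Sw 0 * tensorEmb N n 0 D * embR N n Sw 0) :
    ∀ m, m + 1 ≤ n →
      DpProd N n Rw Sw D m * (Abar N n Rw Sw (M * D) m + v * (jnW N n Sw m - 1)) =
        Abar N n Rw Sw M m * Abar N n Rw Sw D m * DpProd N n Rw Sw D m * jnW N n Sw m := by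
  intro m
  induction m with
  | zero =>
    intro _
    show (1 : Matrix _ _ W) * (Abar N n Rw Sw (M * D) 0 + v * ((1 : Matrix _ _ W) - 1)) =
      Abar N n Rw Sw M 0 * Abar N n Rw Sw D 0 * 1 * 1
    rw [sub_self, mul_zero, add_zero, one_mul, mul_one, mul_one, h.Abar_mul]
  | succ m ih =>
    intro hm
    rw [DpProd_succ]
    show (Abar N n Rw Sw D m * DpProd N n Rw Sw D m) *
        ((embR N n Rw m * Abar N n Rw Sw (M * D) m * embR N n Sw m) +
          v * ((embR N n Sw m * jnW N n Sw m * embR N n Sw m) - 1)) =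
      Abar N n Rw Sw M (m+1) * Abar N n Rw Sw D (m+1) *
        (Abar N n Rw Sw D m * DpProd N n Rw Sw D m) *
        (embR N n Sw m * jnW N n Sw m * embR N n Sw m)
    have hDpr : DpProd N n Rw Sw D m * embR N n Rw m = embR N n Rw m * DpProd N n Rw Sw D m :=
      (h.comm_DpProd D m (fun k hk =>
        h.commR_Abar D k m (by omega) (Or.inr (by omega)))).symm
    have hDps : DpProd N n Rw Sw D m * embR N n Sw m = embR N n Sw m * DpProd N n Rw Sw D m :=
      (h.comm_DpProd D m (fun k hk =>
        h.commS_Abar D k m (by omega) (Or.inr (by omega)))).symm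
    have e := key_step (A := Matrix (Fin n → Fin N) (Fin n → Fin N) W)
      (u := u) (v := v) (r := embR N n Rw m) (s := embR N n Sw m)
      (Dm := Abar N n Rw Sw D m) (Dp := DpProd N n Rw Sw D m)
      (L := Abar N n Rw Sw (M * D) m) (jm := jnW N n Sw m)
      (Mm := Abar N n Rw Sw M m) (Mm1 := Abar N n Rw Sw M (m+1))
      (Dm1 := Abar N n Rw Sw D (m+1))
      hu hv huv (h.rs m) (h.sr m) hDpr hDps rfl rfl
      (ih (by omega))
      (h.crossLevel M D hc0 m (by omega))
      (h.sReLevel D hd0 m (by omega))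
      (hsub m (by omega))
    calc (Abar N n Rw Sw D m * DpProd N n Rw Sw D m) *
        ((embR N n Rw m * Abar N n Rw Sw (M * D) m * embR N n Sw m) +
          v * ((embR N n Sw m * jnW N n Sw m * embR N n Sw m) - 1))
        = Abar N n Rw Sw M (m+1) * Abar N n Rw Sw D (m+1) *
            (Abar N n Rw Sw D m * DpProd N n Rw Sw D m) *
            (embR N n Sw m * jnW N n Sw m * embR N n Sw m) := e

end GoodPair
end MainCalc2
section MasterP
variable {N n : ℕ} {W : Type*} [Ring W]
variable {Rw Sw : Matrix (Fin N × Fin N) (Fin N × Fin N) W}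

lemma prod_range_succ' {β : Type*} [Monoid β] (f : ℕ → β) (m : ℕ) :
    ((List.range (m+1)).map f).prod = ((List.range m).map f).prod * f m := by
  simp [List.range_succ]

namespace GoodPair

lemma masterP (h : GoodPair N n Rw Sw) (M D : Matrix (Fin N) (Fin N) W)
    (u v : Matrix (Fin n → Fin N) (Fin n → Fin N) W)
    (hu : ∀ z, u * z = z * u) (hv : ∀ z, v * z = z * v) (huv : u * v = 1)
    (hsub : ∀ i, i + 1 < n → embR N n Sw i = embR N n Rw i - u)
    (hc0 : tensorEmb N n 0 D * Abar N n Rw Sw M 1 =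
      embR N n Sw 0 + Abar N n Rw Sw M 1 * tensorEmb N n 0 D *
        (embR N n Sw 0 * embR N n Sw 0))
    (hd0 : embR N n Sw 0 * tensorEmb N n 0 D * embR N n Sw 0 * tensorEmb N n 0 D =
      tensorEmb N n 0 D * embR N n Sw 0 * tensorEmb N n 0 D * embR N n Sw 0) :
    ∀ m, m ≤ n →
      ((List.range m).map (fun k =>
          Abar N n Rw Sw (M * D) k + v * (jnW N n Sw k - 1))).prod =
        ((List.range m).map (fun k => Abar N n Rw Sw M k)).prod *
          DpProd N n Rw Sw D m *
          ((List.range m).map (fun k => jnW N n Sw k)).prod := by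
  intro m
  induction m with
  | zero => intro _; simp [DpProd_zero]
  | succ m ih =>
    intro hm
    have IH := ih (by omega)
    rw [prod_range_succ', prod_range_succ', prod_range_succ', IH, DpProd_succ]
    set X := Abar N n Rw Sw (M * D) m + v * (jnW N n Sw m - 1) with hX
    set J := ((List.range m).map (fun k => jnW N n Sw k)).prod with hJ
    set MP := ((List.range m).map (fun k => Abar N n Rw Sw M k)).prod with hMP
    set DP := DpProd N n Rw Sw D m with hDP
    have s1 : J * X = X * J := by
      refine (Commute.list_prod_left _ _ ?_)
      intro y hy
      simp only [List.mem_map, List.mem_range] at hy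
      obtain ⟨k, hk, rfl⟩ := hy
      have c1 : Commute (jnW N n Sw k) (Abar N n Rw Sw (M * D) m) :=
        h.jn_comm_Abar (M * D) k m hk (by omega)
      have c2 : Commute (jnW N n Sw k) v := (Commute.symm (hv (jnW N n Sw k)))
      have c3 : Commute (jnW N n Sw k) (jnW N n Sw m - 1) := by
        have : Commute (jnW N n Sw k) (jnW N n Sw m) := h.jn_comm_jn m k hk (by omega)
        exact this.sub_right (Commute.one_right _)
      exact c1.add_right (c2.mul_right c3)
    have s2 : DP * X = Abar N n Rw Sw M m * Abar N n Rw Sw D m * DP * jnW N n Sw m :=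
      h.keyLemma M D u v hu hv huv hsub hc0 hd0 m (by omega)
    have s3 : jnW N n Sw m * J = J * jnW N n Sw m := by
      refine (Commute.list_prod_right _ _ ?_)
      intro y hy
      simp only [List.mem_map, List.mem_range] at hy
      obtain ⟨k, hk, rfl⟩ := hy
      exact (show Commute (jnW N n Sw k) (jnW N n Sw m) from
        h.jn_comm_jn m k hk (by omega)).symm
    calc MP * DP * J * X
        = MP * DP * (J * X) := by noncomm_ring
      _ = MP * DP * (X * J) := by rw [s1]
      _ = MP * (DP * X) * J := by noncomm_ring
      _ = MP * (Abar N n Rw Sw M m * Abar N n Rw Sw D m * DP * jnW N n Sw m) * J := by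
          rw [s2]
      _ = MP * Abar N n Rw Sw M m * (Abar N n Rw Sw D m * DP) * (jnW N n Sw m * J) := by
          noncomm_ring
      _ = MP * Abar N n Rw Sw M m * (Abar N n Rw Sw D m * DP) * (J * jnW N n Sw m) := by
          rw [s3]

end GoodPair
end MasterP
section Final

lemma smul_map_comm {W : Type*} [Ring W] [Algebra ℂ W] {ι : Type*} [Fintype ι]
    (c : ℂ) (X : Matrix ι ι ℂ) :
    ((c • X).map (algebraMap ℂ W)) = c • (X.map (algebraMap ℂ W)) := by
  ext a b
  simp only [Matrix.map_apply, Matrix.smul_apply, smul_eq_mul, _root_.map_mul]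
  rw [Algebra.smul_def]

/-- universal quantum matrix Capelli identity: for a
skew-invertible Hecke `R`-matrix with parameter `q` (`qᵏ ≠ 1` for `k ≥ 1`) and
matrices `M`, `D` over a unital ℂ-algebra `W` satisfying the Reflection
Equation, the `R⁻¹`-Reflection Equation and the cross relations, with
`L̂ = MD`, one has for every `n ≥ 1` in `Mat_N(ℂ)^{⊗n} ⊗ W`:
`L̂_{1̄}(L̂_{2̄} + (J₂⁻¹−1)/(q−q⁻¹))⋯(L̂_{n̄} + (Jₙ⁻¹−1)/(q−q⁻¹))
  = M_{1̄}⋯M_{n̄} D_{n̄}⋯D_{1̄} J₁⁻¹⋯Jₙ⁻¹`. -/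
theorem universal_quantum_matrix_Capelli (N : ℕ) (hN : 1 ≤ N) (q : ℂ)
    (hq0 : q ≠ 0) (hq : ∀ k : ℕ, 1 ≤ k → q ^ k ≠ 1)
    (R : Matrix (Fin N × Fin N) (Fin N × Fin N) ℂ)
    (hbraid : embR N 3 R 0 * embR N 3 R 1 * embR N 3 R 0 =
      embR N 3 R 1 * embR N 3 R 0 * embR N 3 R 1)
    (hHecke : R * R = 1 + (q - q⁻¹) • R)
    (hskew : ∃ Ψ : Matrix (Fin N × Fin N) (Fin N × Fin N) ℂ,
      ptr2 N (embR N 3 R 0 * embR N 3 Ψ 1) = swap13 N ∧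
      ptr2 N (embR N 3 Ψ 0 * embR N 3 R 1) = swap13 N)
    (W : Type*) [Ring W] [Algebra ℂ W]
    (M D : Matrix (Fin N) (Fin N) W)
    (hM : embR N 2 (R.map (algebraMap ℂ W)) 0 * tensorEmb N 2 0 M *
        embR N 2 (R.map (algebraMap ℂ W)) 0 * tensorEmb N 2 0 M =
      tensorEmb N 2 0 M * embR N 2 (R.map (algebraMap ℂ W)) 0 *
        tensorEmb N 2 0 M * embR N 2 (R.map (algebraMap ℂ W)) 0)
    (hD : embR N 2 (R⁻¹.map (algebraMap ℂ W)) 0 * tensorEmb N 2 0 D *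
        embR N 2 (R⁻¹.map (algebraMap ℂ W)) 0 * tensorEmb N 2 0 D =
      tensorEmb N 2 0 D * embR N 2 (R⁻¹.map (algebraMap ℂ W)) 0 *
        tensorEmb N 2 0 D * embR N 2 (R⁻¹.map (algebraMap ℂ W)) 0)
    (hcross : tensorEmb N 2 0 D *
        Abar N 2 (R.map (algebraMap ℂ W)) (R⁻¹.map (algebraMap ℂ W)) M 1 =
      embR N 2 (R⁻¹.map (algebraMap ℂ W)) 0 +
        Abar N 2 (R.map (algebraMap ℂ W)) (R⁻¹.map (algebraMap ℂ W)) M 1 *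
          tensorEmb N 2 0 D * embR N 2 (R⁻¹.map (algebraMap ℂ W)) 0 *
          embR N 2 (R⁻¹.map (algebraMap ℂ W)) 0)
    (n : ℕ) (hn : 1 ≤ n) :
    ((List.range n).map (fun k =>
        Abar N n (R.map (algebraMap ℂ W)) (R⁻¹.map (algebraMap ℂ W)) (M * D) k +
          ((q - q⁻¹)⁻¹ • ((Jm N n R k)⁻¹ - 1)).map (algebraMap ℂ W))).prod =
    ((List.range n).map (fun k =>
        Abar N n (R.map (algebraMap ℂ W)) (R⁻¹.map (algebraMap ℂ W)) M k)).prod *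
      ((List.range n).reverse.map (fun k =>
        Abar N n (R.map (algebraMap ℂ W)) (R⁻¹.map (algebraMap ℂ W)) D k)).prod *
      ((List.range n).map (fun k => ((Jm N n R k)⁻¹).map (algebraMap ℂ W))).prod := by
  classical
  set f := algebraMap ℂ W with hf
  set lam : ℂ := q - q⁻¹ with hlamdef
  have hlam : lam ≠ 0 := by
    intro h0
    apply hq 2 (by norm_num)
    have hq' : q = q⁻¹ := by rwa [sub_eq_zero] at h0
    calc q ^ 2 = q * q := sq q
      _ = q * q⁻¹ := by rw [← hq']
      _ = 1 := mul_inv_cancel₀ hq0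
  -- ℂ-level inverse facts
  have hright : R * (R - lam • 1) = 1 := by
    rw [Matrix.mul_sub, Matrix.mul_smul, Matrix.mul_one, hHecke]
    abel
  have hinvR : R⁻¹ = R - lam • 1 := Matrix.inv_eq_right_inv hright
  have hRRi : R * R⁻¹ = 1 := by rw [hinvR]; exact hright
  have hiRR : R⁻¹ * R = 1 := by
    rw [hinvR, Matrix.sub_mul, Matrix.smul_mul, Matrix.one_mul, hHecke]
    abel
  set Rw := R.map f with hRw
  set Sw := R⁻¹.map f with hSw
  have hRS : Rw * Sw = 1 := by
    rw [hRw, hSw, ← Matrix.map_mul, hRRi, Matrix.map_one f (map_zero f) (map_one f)]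
  have hSR : Sw * Rw = 1 := by
    rw [hRw, hSw, ← Matrix.map_mul, hiRR, Matrix.map_one f (map_zero f) (map_one f)]
  have hcR : ∀ p q' u, Commute (Rw p q') u := fun p q' u => (Algebra.commutes (R p q') u)
  have hcS : ∀ p q' u, Commute (Sw p q') u := fun p q' u => (Algebra.commutes (R⁻¹ p q') u)
  have hSwsub : Sw = Rw - lam • (1 : Matrix (Fin N × Fin N) (Fin N × Fin N) W) := by
    rw [hSw, hinvR, Matrix.map_sub _ (map_sub f), smul_map_comm, Matrix.map_one f (map_zero f) (map_one f)]
  -- braid over W at all positions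
  have hb3 : embR N 3 Rw 0 * embR N 3 Rw 1 * embR N 3 Rw 0 =
      embR N 3 Rw 1 * embR N 3 Rw 0 * embR N 3 Rw 1 := by
    have hm := congrArg (fun X => Matrix.map X f) hbraid
    simpa only [Matrix.map_mul, embR_map] using hm
  have hbrW : ∀ i, i + 2 < n → embR N n Rw i * embR N n Rw (i + 1) * embR N n Rw i =
      embR N n Rw (i + 1) * embR N n Rw i * embR N n Rw (i + 1) := by
    intro i hi
    set ρ : Fin 3 → Fin n := fun k => ⟨i + (k : ℕ), by omega⟩ with hρ
    have hinj : Function.Injective ρ := by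
      intro a b hab
      have h1 : ((ρ a : Fin n) : ℕ) = ((ρ b : Fin n) : ℕ) := congrArg Fin.val hab
      have h2 : i + (a : ℕ) = i + (b : ℕ) := h1
      exact Fin.ext (by omega)
    have h0 : place N n 3 ρ (embR N 3 Rw 0) = embR N n Rw i := by
      have hh := place_embR (ρ := ρ) hinj (j := 0) (by norm_num) rfl Rw
      exact hh
    have h1 : place N n 3 ρ (embR N 3 Rw 1) = embR N n Rw (i + 1) := by
      have hh := place_embR (ρ := ρ) hinj (j := 1) (by norm_num) rfl Rw
      exact hh
    have key := congrArg (fun X => place N n 3 ρ X) hb3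
    rw [← place_mul hinj, ← place_mul hinj, ← place_mul hinj, ← place_mul hinj,
      h0, h1] at key
    exact key
  have hGP : GoodPair N n Rw Sw := ⟨hRS, hSR, hbrW, hcR, hcS⟩
  -- scalar elements
  set u : Matrix (Fin n → Fin N) (Fin n → Fin N) W := lam • 1 with hudef
  set v : Matrix (Fin n → Fin N) (Fin n → Fin N) W := lam⁻¹ • 1 with hvdef
  have hu : ∀ z, u * z = z * u := by
    intro z
    rw [hudef, Matrix.smul_mul, Matrix.mul_smul, Matrix.one_mul, Matrix.mul_one]
  have hv : ∀ z, v * z = z * v := by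
    intro z
    rw [hvdef, Matrix.smul_mul, Matrix.mul_smul, Matrix.one_mul, Matrix.mul_one]
  have huv : u * v = 1 := by
    rw [hudef, hvdef, Matrix.smul_mul, Matrix.mul_smul, Matrix.mul_one, smul_smul,
      mul_inv_cancel₀ hlam, one_smul]
  have hsub : ∀ i, i + 1 < n → embR N n Sw i = embR N n Rw i - u := by
    intro i hi
    rw [hSwsub, embR_sub hi, embR_smul hi, embR_one, hudef]
  -- inverse Jucys–Murphy over ℂ and its image
  have hJK : ∀ k, Jm N n R k * jnW N n R⁻¹ k = 1 ∧ jnW N n R⁻¹ k * Jm N n R k = 1 := by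
    intro k
    induction k with
    | zero => constructor <;> simp [Jm, jnW]
    | succ k ih =>
      have rsC : embR N n R k * embR N n R⁻¹ k = 1 := by
        rw [embR_mul, hRRi, embR_one]
      have srC : embR N n R⁻¹ k * embR N n R k = 1 := by
        rw [embR_mul, hiRR, embR_one]
      constructor
      · show (embR N n R k * Jm N n R k * embR N n R k) *
          (embR N n R⁻¹ k * jnW N n R⁻¹ k * embR N n R⁻¹ k) = 1
        calc (embR N n R k * Jm N n R k * embR N n R k) *
            (embR N n R⁻¹ k * jnW N n R⁻¹ k * embR N n R⁻¹ k)
            = embR N n R k * Jm N n R k * (embR N n R k * embR N n R⁻¹ k) *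
              jnW N n R⁻¹ k * embR N n R⁻¹ k := by noncomm_ring
          _ = embR N n R k * (Jm N n R k * jnW N n R⁻¹ k) * embR N n R⁻¹ k := by
              rw [rsC]; noncomm_ring
          _ = embR N n R k * embR N n R⁻¹ k := by rw [ih.1]; noncomm_ring
          _ = 1 := rsC
      · show (embR N n R⁻¹ k * jnW N n R⁻¹ k * embR N n R⁻¹ k) *
          (embR N n R k * Jm N n R k * embR N n R k) = 1
        calc (embR N n R⁻¹ k * jnW N n R⁻¹ k * embR N n R⁻¹ k) *
            (embR N n R k * Jm N n R k * embR N n R k)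
            = embR N n R⁻¹ k * jnW N n R⁻¹ k * (embR N n R⁻¹ k * embR N n R k) *
              Jm N n R k * embR N n R k := by noncomm_ring
          _ = embR N n R⁻¹ k * (jnW N n R⁻¹ k * Jm N n R k) * embR N n R k := by
              rw [srC]; noncomm_ring
          _ = embR N n R⁻¹ k * embR N n R k := by rw [ih.2]; noncomm_ring
          _ = 1 := srC
  have hJinv : ∀ k, (Jm N n R k)⁻¹ = jnW N n R⁻¹ k := fun k =>
    Matrix.inv_eq_right_inv (hJK k).1
  have hjmap : ∀ k, (jnW N n R⁻¹ k).map f = jnW N n Sw k := by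
    intro k
    induction k with
    | zero => exact Matrix.map_one f (map_zero f) (map_one f)
    | succ k ih =>
      show (embR N n R⁻¹ k * jnW N n R⁻¹ k * embR N n R⁻¹ k).map f = _
      rw [Matrix.map_mul, Matrix.map_mul, ih, embR_map]
      rfl
  have hJmmap : ∀ k, ((Jm N n R k)⁻¹).map f = jnW N n Sw k := by
    intro k; rw [hJinv k, hjmap k]
  -- identify LHS factors
  have hfactor : ∀ k, ((q - q⁻¹)⁻¹ • ((Jm N n R k)⁻¹ - 1)).map f =
      v * (jnW N n Sw k - 1) := by
    intro k
    rw [smul_map_comm, Matrix.map_sub _ (map_sub f),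
      Matrix.map_one f (map_zero f) (map_one f), hJmmap k, hvdef,
      Matrix.smul_mul, Matrix.one_mul]
  rcases Nat.lt_or_ge n 2 with hn2 | hn2
  · -- n = 1
    have hn1 : n = 1 := by omega
    subst hn1
    simp only [List.range_succ, List.range_zero, List.map_nil, List.map_append,
      List.map_cons, List.prod_append, List.prod_cons, List.prod_nil, List.nil_append,
      List.reverse_cons, List.reverse_nil, one_mul, mul_one]
    rw [hfactor 0]
    show Abar N 1 Rw Sw (M * D) 0 + v * (jnW N 1 Sw 0 - 1) =
      Abar N 1 Rw Sw M 0 * Abar N 1 Rw Sw D 0 * ((Jm N 1 R 0)⁻¹).map f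
    rw [hJmmap 0]
    show tensorEmb N 1 0 (M * D) + v * ((1 : Matrix _ _ W) - 1) =
      tensorEmb N 1 0 M * tensorEmb N 1 0 D * (1 : Matrix _ _ W)
    rw [sub_self, mul_zero, add_zero, mul_one, tensorEmb_mul]
  · -- n ≥ 2 : transfer the cross relations from 2 legs to n legs
    set ρ2 : Fin 2 → Fin n := fun k => ⟨(k : ℕ), by omega⟩ with hρ2
    have hinj2' : Function.Injective ρ2 := by
      intro a b hab
      have h1 : ((ρ2 a : Fin n) : ℕ) = ((ρ2 b : Fin n) : ℕ) := congrArg Fin.val hab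
      have h2 : (a : ℕ) = (b : ℕ) := h1
      exact Fin.ext h2
    have p_t : ∀ A : Matrix (Fin N) (Fin N) W,
        place N n 2 ρ2 (tensorEmb N 2 0 A) = tensorEmb N n 0 A := by
      intro A
      exact place_tensorEmb (ρ := ρ2) hinj2' (j := 0) (by norm_num) A
    have p_e : ∀ X : Matrix (Fin N × Fin N) (Fin N × Fin N) W,
        place N n 2 ρ2 (embR N 2 X 0) = embR N n X 0 := by
      intro X
      exact place_embR (ρ := ρ2) hinj2' (j := 0) (by norm_num) rfl X
    have p_A : place N n 2 ρ2 (Abar N 2 Rw Sw M 1) = Abar N n Rw Sw M 1 := by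
      show place N n 2 ρ2 (embR N 2 Rw 0 * tensorEmb N 2 0 M * embR N 2 Sw 0) = _
      rw [← place_mul hinj2', ← place_mul hinj2', p_e, p_e, p_t]
      rfl
    have hc0 : tensorEmb N n 0 D * Abar N n Rw Sw M 1 =
        embR N n Sw 0 + Abar N n Rw Sw M 1 * tensorEmb N n 0 D *
          (embR N n Sw 0 * embR N n Sw 0) := by
      have key := congrArg (fun X => place N n 2 ρ2 X) hcross
      rw [place_add, ← place_mul hinj2', ← place_mul hinj2', ← place_mul hinj2',
        ← place_mul hinj2', p_t, p_e, p_A] at key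
      rw [key]
      noncomm_ring
    have hd0 : embR N n Sw 0 * tensorEmb N n 0 D * embR N n Sw 0 * tensorEmb N n 0 D =
        tensorEmb N n 0 D * embR N n Sw 0 * tensorEmb N n 0 D * embR N n Sw 0 := by
      have key := congrArg (fun X => place N n 2 ρ2 X) hD
      rw [← place_mul hinj2', ← place_mul hinj2', ← place_mul hinj2',
        ← place_mul hinj2', ← place_mul hinj2', ← place_mul hinj2',
        p_t, p_e] at key
      exact key
    have master := hGP.masterP M D u v hu hv huv hsub hc0 hd0 n (le_refl n)
    calc ((List.range n).map (fun k =>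
          Abar N n Rw Sw (M * D) k + ((q - q⁻¹)⁻¹ • ((Jm N n R k)⁻¹ - 1)).map f)).prod
        = ((List.range n).map (fun k =>
            Abar N n Rw Sw (M * D) k + v * (jnW N n Sw k - 1))).prod := by
          have h2 : (List.range n).map (fun k =>
                Abar N n Rw Sw (M * D) k + ((q - q⁻¹)⁻¹ • ((Jm N n R k)⁻¹ - 1)).map f) =
              (List.range n).map (fun k =>
                Abar N n Rw Sw (M * D) k + v * (jnW N n Sw k - 1)) :=
            List.map_congr_left (fun k _ => by rw [hfactor k])
          rw [h2]
      _ = ((List.range n).map (fun k => Abar N n Rw Sw M k)).prod *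
            DpProd N n Rw Sw D n *
            ((List.range n).map (fun k => jnW N n Sw k)).prod := master
      _ = ((List.range n).map (fun k => Abar N n Rw Sw M k)).prod *
            ((List.range n).reverse.map (fun k => Abar N n Rw Sw D k)).prod *
            ((List.range n).map (fun k => ((Jm N n R k)⁻¹).map f)).prod := by
          have h2 : (List.range n).map (fun k => jnW N n Sw k) =
              (List.range n).map (fun k => ((Jm N n R k)⁻¹).map f) :=
            List.map_congr_left (fun k _ => (hJmmap k).symm)
          rw [h2]
          rfl

end Final
end
end
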